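/- arXiv:2302.13144 — 7 statements merged into one kernel-verified Lean document; each statement's English description precedes it below -/
import Mathlib

section
/- Let A be a real n×n matrix, B a real n×m matrix, Q and R symmetric positive definite, and let P* be a symmetric positive definite solution of the algebraic Riccati equation P* = Q + AᵀP*A − AᵀP*B(R + BᵀP*B)⁻¹BᵀP*A, and let K* = (R + BᵀP*B)⁻¹BᵀP*A. Then the closed-loop matrix A − BK* satisfies ‖A − BK*‖_{P*} < 1; in particular, its spectral radius satisfies ρ(A − BK*) < 1, i.e., the optimal LQR policy is stabilizing. -/
open Matrix Finset

/-- Spectral norm of a real matrix: the operator norm with respect to the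
Euclidean norms on the domain and codomain. -/
noncomputable def specNorm {p q : ℕ} (M : Matrix (Fin p) (Fin q) ℝ) : ℝ :=
  ‖LinearMap.toContinuousLinearMap (Matrix.toEuclideanLin M)‖

/-- Spectral radius of a real square matrix: the largest modulus of a
(complex) eigenvalue. -/
noncomputable def specRad {p : ℕ} (M : Matrix (Fin p) (Fin p) ℝ) : ℝ :=
  sSup {r : ℝ | ∃ μ ∈ spectrum ℂ (M.map (algebraMap ℝ ℂ)), r = ‖μ‖}

/-- Smallest (real) eigenvalue of a square matrix. -/
noncomputable def lambdaMin {p : ℕ} (S : Matrix (Fin p) (Fin p) ℝ) : ℝ :=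
  sInf {r : ℝ | ∃ v : Fin p → ℝ, v ≠ 0 ∧ S.mulVec v = r • v}

/-- `W`-induced norm of `M`: `sup_{z ≠ 0} √((zᵀMᵀWMz)/(zᵀWz))`. -/
noncomputable def winducedNorm {p : ℕ} (W M : Matrix (Fin p) (Fin p) ℝ) : ℝ :=
  sSup {r : ℝ | ∃ z : Fin p → ℝ, z ≠ 0 ∧
    r = Real.sqrt ((z ⬝ᵥ (Mᵀ * W * M).mulVec z) / (z ⬝ᵥ W.mulVec z))}

/-- `W`-relative bound of a symmetric matrix `X`: `sup_{z ≠ 0} (zᵀXz)/(zᵀWz)`. -/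
noncomputable def wrelBound {p : ℕ} (W X : Matrix (Fin p) (Fin p) ℝ) : ℝ :=
  sSup {r : ℝ | ∃ z : Fin p → ℝ, z ≠ 0 ∧
    r = (z ⬝ᵥ X.mulVec z) / (z ⬝ᵥ W.mulVec z)}

/-- Frobenius norm of a real matrix. -/
noncomputable def frobNorm {p q : ℕ} (M : Matrix (Fin p) (Fin q) ℝ) : ℝ :=
  Real.sqrt (∑ i, ∑ j, (M i j) ^ 2)

/- ### Auxiliary lemmas -/

lemma aux_quad_smul {n : ℕ} (M : Matrix (Fin n) (Fin n) ℝ) (t : ℝ) (w : Fin n → ℝ) :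
    (t • w) ⬝ᵥ M *ᵥ (t • w) = t ^ 2 * (w ⬝ᵥ M *ᵥ w) := by
  rw [mulVec_smul, dotProduct_smul, smul_dotProduct]
  simp [smul_eq_mul]; ring

/-- Coercivity of one positive definite quadratic form against another. -/
lemma aux_coercive {n : ℕ} {P X : Matrix (Fin n) (Fin n) ℝ} (hP : P.PosDef) (hX : X.PosDef) :
    ∃ c : ℝ, 0 < c ∧ c ≤ 1 ∧ ∀ z : Fin n → ℝ, c * (z ⬝ᵥ P *ᵥ z) ≤ z ⬝ᵥ X *ᵥ z := by
  rcases Nat.eq_zero_or_pos n with hn | hn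
  · subst hn
    refine ⟨1, one_pos, le_rfl, fun z => ?_⟩
    have hz : z = 0 := Subsingleton.elim _ _
    simp [hz]
  · have : Nonempty (Fin n) := ⟨⟨0, hn⟩⟩
    have hnt : Nontrivial (Fin n → ℝ) := inferInstance
    have hcomp : IsCompact (Metric.sphere (0 : Fin n → ℝ) 1) := isCompact_sphere 0 1
    have hne : (Metric.sphere (0 : Fin n → ℝ) 1).Nonempty :=
      NormedSpace.sphere_nonempty.mpr zero_le_one
    have hcontX : Continuous fun z : Fin n → ℝ => z ⬝ᵥ X *ᵥ z := by
      simp only [dotProduct, mulVec]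
      fun_prop
    have hcontP : Continuous fun z : Fin n → ℝ => z ⬝ᵥ P *ᵥ z := by
      simp only [dotProduct, mulVec]
      fun_prop
    obtain ⟨u₁, hu₁s, hu₁⟩ := hcomp.exists_isMinOn hne hcontX.continuousOn
    obtain ⟨u₂, hu₂s, hu₂⟩ := hcomp.exists_isMaxOn hne hcontP.continuousOn
    have hu₁0 : u₁ ≠ 0 := by
      intro h; rw [Metric.mem_sphere, h] at hu₁s; simp at hu₁s
    have hu₂0 : u₂ ≠ 0 := by
      intro h; rw [Metric.mem_sphere, h] at hu₂s; simp at hu₂s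
    have hc₁ : 0 < u₁ ⬝ᵥ X *ᵥ u₁ := by simpa using hX.dotProduct_mulVec_pos hu₁0
    have hc₂ : 0 < u₂ ⬝ᵥ P *ᵥ u₂ := by simpa using hP.dotProduct_mulVec_pos hu₂0
    set c₁ := u₁ ⬝ᵥ X *ᵥ u₁
    set c₂ := u₂ ⬝ᵥ P *ᵥ u₂
    refine ⟨min (c₁ / c₂) 1, lt_min (div_pos hc₁ hc₂) one_pos, min_le_right _ _, fun z => ?_⟩
    by_cases hz : z = 0
    · simp [hz]
    · have ht : (0:ℝ) < ‖z‖ := norm_pos_iff.mpr hz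
      set u : Fin n → ℝ := ‖z‖⁻¹ • z with hu
      have hus : u ∈ Metric.sphere (0 : Fin n → ℝ) 1 := by
        simp [hu, norm_smul, abs_of_pos (inv_pos.mpr ht), inv_mul_cancel₀ ht.ne']
      have hzu : z = ‖z‖ • u := by rw [hu, smul_inv_smul₀ ht.ne']
      have hXz : z ⬝ᵥ X *ᵥ z = ‖z‖ ^ 2 * (u ⬝ᵥ X *ᵥ u) := by
        conv_lhs => rw [hzu]
        exact aux_quad_smul X ‖z‖ u
      have hPz : z ⬝ᵥ P *ᵥ z = ‖z‖ ^ 2 * (u ⬝ᵥ P *ᵥ u) := by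
        conv_lhs => rw [hzu]
        exact aux_quad_smul P ‖z‖ u
      have h1 : c₁ ≤ u ⬝ᵥ X *ᵥ u := hu₁ hus
      have h2 : u ⬝ᵥ P *ᵥ u ≤ c₂ := hu₂ hus
      have hmin : min (c₁ / c₂) 1 ≤ c₁ / c₂ := min_le_left _ _
      rw [hXz, hPz]
      have hPu : 0 ≤ u ⬝ᵥ P *ᵥ u := by simpa using hP.posSemidef.dotProduct_mulVec_nonneg u
      have key : c₁ / c₂ * (‖z‖ ^ 2 * (u ⬝ᵥ P *ᵥ u)) ≤ ‖z‖ ^ 2 * (u ⬝ᵥ X *ᵥ u) := by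
        rw [div_mul_eq_mul_div, div_le_iff₀ hc₂]
        nlinarith [mul_le_mul_of_nonneg_left h2 (mul_nonneg hc₁.le (sq_nonneg ‖z‖)),
          mul_le_mul_of_nonneg_right h1 (mul_nonneg (sq_nonneg ‖z‖) hc₂.le)]
      refine le_trans ?_ key
      have hPzz : 0 ≤ ‖z‖ ^ 2 * (u ⬝ᵥ P *ᵥ u) := by positivity
      exact mul_le_mul_of_nonneg_right hmin hPzz

/-- The fundamental Riccati/Lyapunov identity for the optimal closed loop. -/
lemma aux_riccati_key {n m : ℕ}
    (A : Matrix (Fin n) (Fin n) ℝ) (B : Matrix (Fin n) (Fin m) ℝ)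
    (Q Pstar : Matrix (Fin n) (Fin n) ℝ) (R : Matrix (Fin m) (Fin m) ℝ)
    (hR : R.PosDef) (hPstar : Pstar.PosDef)
    (hARE : Pstar = Q + Aᵀ * Pstar * A
      - Aᵀ * Pstar * B * (R + Bᵀ * Pstar * B)⁻¹ * (Bᵀ * Pstar * A))
    (Kstar : Matrix (Fin m) (Fin n) ℝ)
    (hKstar : Kstar = (R + Bᵀ * Pstar * B)⁻¹ * (Bᵀ * Pstar * A)) :
    (A - B * Kstar)ᵀ * Pstar * (A - B * Kstar)
      = Pstar - (Q + Kstarᵀ * R * Kstar) := by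
  have hBt : ∀ {p q : ℕ} (M : Matrix (Fin p) (Fin q) ℝ), Mᴴ = Mᵀ := by
    intro p q M; ext i j; simp [conjTranspose_apply]
  have hS : (R + Bᵀ * Pstar * B).PosDef := by
    apply hR.add_posSemidef
    have := hPstar.posSemidef.conjTranspose_mul_mul_same B
    rwa [hBt] at this
  set S := R + Bᵀ * Pstar * B with hSdef
  have hdet : IsUnit S.det := isUnit_iff_ne_zero.mpr hS.det_pos.ne'
  have hSymm : Sᵀ = S := by
    have := hS.isHermitian
    rwa [IsHermitian, hBt] at this
  have hPsymm : Pstarᵀ = Pstar := by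
    have := hPstar.isHermitian
    rwa [IsHermitian, hBt] at this
  have hSK : S * Kstar = Bᵀ * Pstar * A := by
    rw [hKstar, ← Matrix.mul_assoc, Matrix.mul_nonsing_inv _ hdet, Matrix.one_mul]
  have hexp : (A - B * Kstar)ᵀ * Pstar * (A - B * Kstar)
      = (Aᵀ * (Pstar * A) - Aᵀ * (Pstar * (B * Kstar)))
        - (Kstarᵀ * (Bᵀ * (Pstar * A)) - Kstarᵀ * (Bᵀ * (Pstar * (B * Kstar)))) := by
    rw [transpose_sub, transpose_mul, Matrix.sub_mul, Matrix.sub_mul, Matrix.mul_sub,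
      Matrix.mul_sub]
    simp only [Matrix.mul_assoc]
  rw [hexp]
  have h1 : Kstarᵀ * (Bᵀ * (Pstar * (B * Kstar)))
      = Kstarᵀ * (S * Kstar) - Kstarᵀ * (R * Kstar) := by
    rw [← Matrix.mul_sub]
    congr 1
    rw [hSdef, Matrix.add_mul, Matrix.mul_assoc, Matrix.mul_assoc]
    abel
  have h2 : Kstarᵀ * (S * Kstar) = Kstarᵀ * (Bᵀ * (Pstar * A)) := by
    rw [hSK, Matrix.mul_assoc]
  have h3 : Aᵀ * (Pstar * (B * Kstar))
      = Aᵀ * Pstar * B * S⁻¹ * (Bᵀ * Pstar * A) := by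
    rw [hKstar]
    simp only [Matrix.mul_assoc]
  rw [h1, h2, h3]
  have h4 : Pstar - (Q + Kstarᵀ * R * Kstar)
      = (Q + Aᵀ * Pstar * A - Aᵀ * Pstar * B * S⁻¹ * (Bᵀ * Pstar * A))
        - (Q + Kstarᵀ * R * Kstar) := by rw [← hARE]
  rw [h4]
  simp only [Matrix.mul_assoc]
  abel

lemma aux_coe_quad {n : ℕ} (M : Matrix (Fin n) (Fin n) ℝ) (x y : Fin n → ℝ) :
    (fun i => ((x i : ℝ) : ℂ)) ⬝ᵥ (M.map (algebraMap ℝ ℂ)) *ᵥ (fun i => ((y i : ℝ) : ℂ))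
      = ((x ⬝ᵥ M *ᵥ y : ℝ) : ℂ) := by
  simp only [dotProduct, mulVec, Matrix.map_apply, algebraMap.coe_smul]
  push_cast
  rfl

lemma aux_quad_symm {n : ℕ} (M : Matrix (Fin n) (Fin n) ℝ) (hM : Mᵀ = M) (x y : Fin n → ℝ) :
    x ⬝ᵥ M *ᵥ y = y ⬝ᵥ M *ᵥ x := by
  have h : x ᵥ* M = M *ᵥ x := by rw [← hM, vecMul_transpose, hM]
  rw [Matrix.dotProduct_mulVec, h, dotProduct_comm]

/-- A complex Hermitian-form evaluation of (the complexification of) a real symmetric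
matrix equals the sum of the real quadratic forms of the real and imaginary parts. -/
lemma aux_quad_map_eq {n : ℕ} (M : Matrix (Fin n) (Fin n) ℝ) (hM : Mᵀ = M) (v : Fin n → ℂ) :
    star v ⬝ᵥ (M.map (algebraMap ℝ ℂ)) *ᵥ v
      = (((fun i => (v i).re) ⬝ᵥ M *ᵥ (fun i => (v i).re)
          + (fun i => (v i).im) ⬝ᵥ M *ᵥ (fun i => (v i).im) : ℝ) : ℂ) := by
  set a : Fin n → ℝ := fun i => (v i).re with ha
  set b : Fin n → ℝ := fun i => (v i).im with hb
  set ac : Fin n → ℂ := fun i => ((a i : ℝ) : ℂ) with hac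
  set bc : Fin n → ℂ := fun i => ((b i : ℝ) : ℂ) with hbc
  have hv : v = ac + Complex.I • bc := by
    funext i
    simp only [Pi.add_apply, Pi.smul_apply, smul_eq_mul, hac, hbc, ha, hb]
    rw [mul_comm, Complex.re_add_im]
  have hsv : star v = ac - Complex.I • bc := by
    funext i
    simp only [Pi.star_apply, Pi.sub_apply, Pi.smul_apply, smul_eq_mul, hac, hbc, ha, hb]
    rw [RCLike.star_def, Complex.ext_iff]
    simp
  rw [hsv, hv]
  simp only [mulVec_add, mulVec_smul, sub_dotProduct, smul_dotProduct, dotProduct_add,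
    dotProduct_smul]
  rw [hac, hbc]
  rw [aux_coe_quad, aux_coe_quad, aux_coe_quad, aux_coe_quad]
  rw [aux_quad_symm M hM b a]
  simp only [smul_eq_mul]
  ring_nf
  rw [Complex.I_sq]
  push_cast
  ring

lemma aux_star_coe_mulVec {n : ℕ} (L : Matrix (Fin n) (Fin n) ℝ) (v : Fin n → ℂ) :
    (L.map (algebraMap ℝ ℂ)) *ᵥ (star v) = star ((L.map (algebraMap ℝ ℂ)) *ᵥ v) := by
  funext i
  simp only [mulVec, dotProduct, Pi.star_apply, Matrix.map_apply, star_sum, star_mul']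
  congr 1
  funext j
  rw [RCLike.star_def]
  simp [Complex.conj_ofReal, mul_comm]

lemma aux_exists_eigenvector {n : ℕ} (M : Matrix (Fin n) (Fin n) ℂ) (μ : ℂ)
    (h : μ ∈ spectrum ℂ M) :
    ∃ v : Fin n → ℂ, v ≠ 0 ∧ M *ᵥ v = μ • v := by
  have hev : Module.End.HasEigenvalue
      (Matrix.toLinAlgEquiv' M : Module.End ℂ (Fin n → ℂ)) μ := by
    rw [Module.End.hasEigenvalue_iff_mem_spectrum, AlgEquiv.spectrum_eq]
    exact h
  obtain ⟨v, hv⟩ := hev.exists_hasEigenvector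
  refine ⟨v, hv.2, ?_⟩
  have := hv.apply_eq_smul
  rwa [Matrix.toLinAlgEquiv'_apply] at this

/-- The optimal LQR closed loop `A - BK*` contracts in the
`P*`-induced norm, and in particular its spectral radius is below one, i.e.,
the optimal LQR policy is stabilizing. -/
theorem optimal_lqr_policy_stabilizing {n m : ℕ}
    (A : Matrix (Fin n) (Fin n) ℝ) (B : Matrix (Fin n) (Fin m) ℝ)
    (Q Pstar : Matrix (Fin n) (Fin n) ℝ) (R : Matrix (Fin m) (Fin m) ℝ)
    (hQ : Q.PosDef) (hR : R.PosDef) (hPstar : Pstar.PosDef)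
    (hARE : Pstar = Q + Aᵀ * Pstar * A
      - Aᵀ * Pstar * B * (R + Bᵀ * Pstar * B)⁻¹ * (Bᵀ * Pstar * A))
    (Kstar : Matrix (Fin m) (Fin n) ℝ)
    (hKstar : Kstar = (R + Bᵀ * Pstar * B)⁻¹ * (Bᵀ * Pstar * A)) :
    winducedNorm Pstar (A - B * Kstar) < 1 ∧ specRad (A - B * Kstar) < 1 := by
  have hBt : ∀ {p q : ℕ} (M : Matrix (Fin p) (Fin q) ℝ), Mᴴ = Mᵀ := by
    intro p q M; ext i j; simp [conjTranspose_apply]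
  set L := A - B * Kstar with hL
  have hX : (Q + Kstarᵀ * R * Kstar).PosDef := by
    apply hQ.add_posSemidef
    have := hR.posSemidef.conjTranspose_mul_mul_same Kstar
    rwa [hBt] at this
  set X := Q + Kstarᵀ * R * Kstar with hXdef
  have key : Lᵀ * Pstar * L = Pstar - X :=
    aux_riccati_key A B Q Pstar R hR hPstar hARE Kstar hKstar
  have hPsymm : Pstarᵀ = Pstar := by
    have := hPstar.isHermitian
    rwa [IsHermitian, hBt] at this
  have hXsymm : Xᵀ = X := by
    have := hX.isHermitian
    rwa [IsHermitian, hBt] at this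
  obtain ⟨c, hc0, hc1, hc⟩ := aux_coercive hPstar hX
  set θ := Real.sqrt (1 - c) with hθ
  have hθ1 : θ < 1 := by
    rw [hθ]
    exact (Real.sqrt_lt' one_pos).mpr (by nlinarith)
  have hratio : ∀ z : Fin n → ℝ, z ≠ 0 →
      (z ⬝ᵥ (Lᵀ * Pstar * L) *ᵥ z) / (z ⬝ᵥ Pstar *ᵥ z) ≤ 1 - c := by
    intro z hz
    have hPz : 0 < z ⬝ᵥ Pstar *ᵥ z := by simpa using hPstar.dotProduct_mulVec_pos hz
    rw [key, Matrix.sub_mulVec, dotProduct_sub, div_le_iff₀ hPz]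
    have := hc z
    nlinarith
  constructor
  · refine lt_of_le_of_lt ?_ hθ1
    apply Real.sSup_le _ (Real.sqrt_nonneg _)
    rintro r ⟨z, hz, rfl⟩
    exact Real.sqrt_le_sqrt (hratio z hz)
  · refine lt_of_le_of_lt ?_ hθ1
    apply Real.sSup_le _ (Real.sqrt_nonneg _)
    rintro r ⟨μ, hμ, rfl⟩
    obtain ⟨v, hv0, hveq⟩ := aux_exists_eigenvector _ μ hμ
    set a : Fin n → ℝ := fun i => (v i).re with ha
    set b : Fin n → ℝ := fun i => (v i).im with hb
    have hab : a ≠ 0 ∨ b ≠ 0 := by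
      by_contra h
      push_neg at h
      apply hv0
      funext i
      have h1 : (v i).re = 0 := congrFun h.1 i
      have h2 : (v i).im = 0 := congrFun h.2 i
      exact Complex.ext (by simpa using h1) (by simpa using h2)
    set qr : ℝ := a ⬝ᵥ Pstar *ᵥ a + b ⬝ᵥ Pstar *ᵥ b with hqr
    set xr : ℝ := a ⬝ᵥ X *ᵥ a + b ⬝ᵥ X *ᵥ b with hxr
    have hq := aux_quad_map_eq Pstar hPsymm v
    have hx := aux_quad_map_eq X hXsymm v
    rw [← ha, ← hb] at hq hx
    -- complexified identity
    have hmapkey : (Lᵀ * Pstar * L).map (algebraMap ℝ ℂ)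
        = (L.map (algebraMap ℝ ℂ))ᵀ * (Pstar.map (algebraMap ℝ ℂ)) * (L.map (algebraMap ℝ ℂ)) := by
      rw [Matrix.map_mul, Matrix.map_mul, Matrix.transpose_map]
    have lhs_eq : star v ⬝ᵥ ((Lᵀ * Pstar * L).map (algebraMap ℝ ℂ)) *ᵥ v
        = (Complex.normSq μ : ℂ) * (star v ⬝ᵥ (Pstar.map (algebraMap ℝ ℂ)) *ᵥ v) := by
      rw [hmapkey, ← Matrix.mulVec_mulVec, ← Matrix.mulVec_mulVec,
        Matrix.dotProduct_mulVec, Matrix.vecMul_transpose, aux_star_coe_mulVec, hveq,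
        mulVec_smul, star_smul, smul_dotProduct, dotProduct_smul, smul_eq_mul, smul_eq_mul,
        ← mul_assoc]
      congr 1
      rw [RCLike.star_def, mul_comm, Complex.mul_conj]
    have hmapsub : (Pstar - X).map (algebraMap ℝ ℂ)
        = Pstar.map (algebraMap ℝ ℂ) - X.map (algebraMap ℝ ℂ) := by
      ext i j; simp [Matrix.map_apply]
    have main : (Complex.normSq μ : ℂ) * ((qr : ℝ) : ℂ) = ((qr - xr : ℝ) : ℂ) := by
      have hsub : star v ⬝ᵥ ((Lᵀ * Pstar * L).map (algebraMap ℝ ℂ)) *ᵥ v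
          = ((qr - xr : ℝ) : ℂ) := by
        rw [key, hmapsub, Matrix.sub_mulVec, dotProduct_sub, hq, hx, ← hqr, ← hxr,
          Complex.ofReal_sub]
      rw [← hq, ← lhs_eq, hsub]
    have hreal : Complex.normSq μ * qr = qr - xr := by exact_mod_cast main
    have hqpos : 0 < qr := by
      have hbn : 0 ≤ b ⬝ᵥ Pstar *ᵥ b := by simpa using hPstar.posSemidef.dotProduct_mulVec_nonneg b
      have han : 0 ≤ a ⬝ᵥ Pstar *ᵥ a := by simpa using hPstar.posSemidef.dotProduct_mulVec_nonneg a
      rcases hab with h | h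
      · have := hPstar.dotProduct_mulVec_pos h
        rw [hqr]
        have : 0 < a ⬝ᵥ Pstar *ᵥ a := by simpa using this
        linarith
      · have := hPstar.dotProduct_mulVec_pos h
        rw [hqr]
        have : 0 < b ⬝ᵥ Pstar *ᵥ b := by simpa using this
        linarith
    have hxc : c * qr ≤ xr := by
      have h1 := hc a
      have h2 := hc b
      rw [hqr, hxr]
      linarith
    have hnorm : Complex.normSq μ ≤ 1 - c := by nlinarith
    rw [Complex.norm_def]
    exact Real.sqrt_le_sqrt hnorm
end

section
/- Let A be a real n×n matrix, B a real n×m matrix, Q symmetric positive semidefinite, R symmetric positive definite, and let P* be a symmetric solution of the algebraic Riccati equation P* = Q + AᵀP*A − AᵀP*B(R + BᵀP*B)⁻¹BᵀP*A with P* positive semidefinite. Set R̃ := R + BᵀP*B and Ā := A − BR̃⁻¹BᵀP*A. Let P be a symmetric matrix with P̃ := P − P* ⪰ 0, and let P⁺ := Q + AᵀPA − AᵀPB(R + BᵀPB)⁻¹BᵀPA be its Riccati update. Then P⁺ − P* = ĀᵀP̃Ā − ĀᵀP̃B(R̃ + BᵀP̃B)⁻¹BᵀP̃Ā = ĀᵀP̃^{1/2}[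 I + P̃^{1/2}BR̃⁻¹BᵀP̃^{1/2} ]⁻¹P̃^{1/2}Ā, where P̃^{1/2} is the unique positive semidefinite square root of P̃ (all the indicated inverses exist). -/
open Matrix Finset

/-- Closed-form expression for the Riccati-update error
`P⁺ - P*` in terms of the closed-loop matrix `Ā` and the psd square root
of `P̃ = P - P*` (all indicated inverses exist). -/
theorem riccati_update_error_formula {n m : ℕ}
    (A : Matrix (Fin n) (Fin n) ℝ) (B : Matrix (Fin n) (Fin m) ℝ)
    (Q Pstar P : Matrix (Fin n) (Fin n) ℝ) (R : Matrix (Fin m) (Fin m) ℝ)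
    (hQ : Q.PosSemidef) (hR : R.PosDef) (hPstar : Pstar.PosSemidef)
    (hARE : Pstar = Q + Aᵀ * Pstar * A
      - Aᵀ * Pstar * B * (R + Bᵀ * Pstar * B)⁻¹ * (Bᵀ * Pstar * A))
    (hPsym : P.IsSymm) (hPt : (P - Pstar).PosSemidef) :
    letI Rt := R + Bᵀ * Pstar * B
    letI Abar := A - B * Rt⁻¹ * (Bᵀ * Pstar * A)
    letI Pplus := Q + Aᵀ * P * A - Aᵀ * P * B * (R + Bᵀ * P * B)⁻¹ * (Bᵀ * P * A)
    letI S := (hPt.1.eigenvectorUnitary : Matrix (Fin n) (Fin n) ℝ) *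
      diagonal ((↑) ∘ Real.sqrt ∘ hPt.1.eigenvalues) *
      (star hPt.1.eigenvectorUnitary : Matrix (Fin n) (Fin n) ℝ)
    IsUnit (R + Bᵀ * P * B) ∧ IsUnit Rt ∧ IsUnit (Rt + Bᵀ * (P - Pstar) * B) ∧
    IsUnit ((1 : Matrix (Fin n) (Fin n) ℝ) + S * B * Rt⁻¹ * (Bᵀ * S)) ∧
    Pplus - Pstar
      = Abarᵀ * (P - Pstar) * Abar
        - Abarᵀ * (P - Pstar) * B * (Rt + Bᵀ * (P - Pstar) * B)⁻¹
          * (Bᵀ * (P - Pstar) * Abar) ∧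
    Pplus - Pstar
      = Abarᵀ * S * ((1 : Matrix (Fin n) (Fin n) ℝ) + S * B * Rt⁻¹ * (Bᵀ * S))⁻¹
          * (S * Abar) := by
  -- basic symmetry facts
  have hPt_symm : (P - Pstar)ᵀ = P - Pstar := hPt.1
  have hPsymm : Pᵀ = P := hPsym
  have hPssymm : Pstarᵀ = Pstar := hPstar.1
  -- positive definiteness and invertibility
  have hPpsd : P.PosSemidef := by simpa using hPt.add hPstar
  have hGpd : (R + Bᵀ * P * B).PosDef :=
    hR.add_posSemidef (hPpsd.conjTranspose_mul_mul_same B)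
  have hRtpd : (R + Bᵀ * Pstar * B).PosDef :=
    hR.add_posSemidef (hPstar.conjTranspose_mul_mul_same B)
  set S : Matrix (Fin n) (Fin n) ℝ := (hPt.1.eigenvectorUnitary : Matrix (Fin n) (Fin n) ℝ) *
      diagonal ((↑) ∘ Real.sqrt ∘ hPt.1.eigenvalues) *
      (star hPt.1.eigenvectorUnitary : Matrix (Fin n) (Fin n) ℝ) with hSdef
  have hSpsd : S.PosSemidef := by
    have hD : (diagonal ((↑) ∘ Real.sqrt ∘ hPt.1.eigenvalues : Fin n → ℝ)).PosSemidef :=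
      PosSemidef.diagonal (by intro i; simp [Real.sqrt_nonneg])
    have := hD.mul_mul_conjTranspose_same (hPt.1.eigenvectorUnitary : Matrix (Fin n) (Fin n) ℝ)
    rw [hSdef, Matrix.star_eq_conjTranspose]
    exact this
  have hSsymm : Sᵀ = S := hSpsd.1
  have hSS : S * S = P - Pstar := by
    have hspec := hPt.1.spectral_theorem
    rw [Unitary.conjStarAlgAut_apply] at hspec
    conv_rhs => rw [hspec]
    rw [hSdef]
    have hUU := Unitary.coe_star_mul_self hPt.1.eigenvectorUnitary
    have hDD : diagonal ((↑) ∘ Real.sqrt ∘ hPt.1.eigenvalues : Fin n → ℝ)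
        * diagonal ((↑) ∘ Real.sqrt ∘ hPt.1.eigenvalues : Fin n → ℝ)
        = diagonal (RCLike.ofReal ∘ hPt.1.eigenvalues : Fin n → ℝ) := by
      rw [diagonal_mul_diagonal]
      congr 1; funext i
      simp [Real.mul_self_sqrt (hPt.eigenvalues_nonneg i)]
    calc _ = (hPt.1.eigenvectorUnitary : Matrix (Fin n) (Fin n) ℝ) *
          (diagonal ((↑) ∘ Real.sqrt ∘ hPt.1.eigenvalues : Fin n → ℝ) *
          ((star hPt.1.eigenvectorUnitary : Matrix (Fin n) (Fin n) ℝ) *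
            (hPt.1.eigenvectorUnitary : Matrix (Fin n) (Fin n) ℝ)) *
          diagonal ((↑) ∘ Real.sqrt ∘ hPt.1.eigenvalues : Fin n → ℝ)) *
          (star hPt.1.eigenvectorUnitary : Matrix (Fin n) (Fin n) ℝ) := by
            simp only [Matrix.mul_assoc]
      _ = _ := by rw [hUU, Matrix.mul_one, hDD]
  set G := R + Bᵀ * P * B with hGdef
  set Rt := R + Bᵀ * Pstar * B with hRtdef
  have hGsymm : Gᵀ = G := hGpd.1
  have hRtsymm : Rtᵀ = Rt := hRtpd.1
  have hGdet : IsUnit G.det := (Matrix.isUnit_iff_isUnit_det G).mp hGpd.isUnit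
  have hRtdet : IsUnit Rt.det := (Matrix.isUnit_iff_isUnit_det Rt).mp hRtpd.isUnit
  have hGinv : G * G⁻¹ = 1 := Matrix.mul_nonsing_inv _ hGdet
  have hRtinv : Rt⁻¹ * Rt = 1 := Matrix.nonsing_inv_mul _ hRtdet
  -- gains
  set K := G⁻¹ * (Bᵀ * P * A) with hKdef
  set Kst := Rt⁻¹ * (Bᵀ * Pstar * A) with hKstdef
  have hGK : G * K = Bᵀ * P * A := by
    rw [hKdef, ← Matrix.mul_assoc, hGinv, Matrix.one_mul]
  have hRtK : Rt * Kst = Bᵀ * Pstar * A := by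
    rw [hKstdef, ← Matrix.mul_assoc, Matrix.mul_nonsing_inv _ hRtdet, Matrix.one_mul]
  have hKtG : Kᵀ * G = Aᵀ * P * B := by
    have h := congrArg Matrix.transpose hGK
    simpa [Matrix.transpose_mul, hGsymm, hPsymm, Matrix.mul_assoc] using h
  have hKstRt : Kstᵀ * Rt = Aᵀ * Pstar * B := by
    have h := congrArg Matrix.transpose hRtK
    simpa [Matrix.transpose_mul, hRtsymm, hPssymm, Matrix.mul_assoc] using h
  -- reduce the Riccati expressions
  have h5 : Aᵀ * P * B * G⁻¹ * (Bᵀ * P * A) = Kᵀ * (Bᵀ * P * A) := by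
    rw [← hKtG, Matrix.mul_nonsing_inv_cancel_right _ _ hGdet]
  have h6 : Aᵀ * Pstar * B * Rt⁻¹ * (Bᵀ * Pstar * A) = Kstᵀ * (Bᵀ * Pstar * A) := by
    rw [← hKstRt, Matrix.mul_nonsing_inv_cancel_right _ _ hRtdet]
  rw [h6] at hARE
  have hGG' : Rt + Bᵀ * (P - Pstar) * B = G := by
    rw [hGdef, hRtdef]
    simp only [Matrix.mul_sub, Matrix.sub_mul]
    abel
  have hAbar : A - B * Rt⁻¹ * (Bᵀ * Pstar * A) = A - B * Kst := by
    rw [hKstdef, Matrix.mul_assoc]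
  -- closed-loop difference relation
  have hGD : G * (K - Kst) = Bᵀ * (P - Pstar) * (A - B * Kst) := by
    have h1 : G * Kst = Bᵀ * Pstar * A + Bᵀ * (P - Pstar) * B * Kst := by
      rw [← hGG', Matrix.add_mul, hRtK]
    rw [Matrix.mul_sub, hGK, h1]
    simp only [Matrix.mul_sub, Matrix.sub_mul, Matrix.mul_add, Matrix.add_mul,
      Matrix.mul_assoc]
    abel
  have hDtG : (A - B * Kst)ᵀ * (P - Pstar) * B = (K - Kst)ᵀ * G := by
    have h := congrArg Matrix.transpose hGD
    simpa [Matrix.transpose_mul, hGsymm, hPt_symm, Matrix.mul_assoc] using h.symm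
  have hterm2 : (A - B * Kst)ᵀ * (P - Pstar) * B * G⁻¹
      * (Bᵀ * (P - Pstar) * (A - B * Kst))
      = (K - Kst)ᵀ * (Bᵀ * (P - Pstar) * (A - B * Kst)) := by
    rw [hDtG, Matrix.mul_nonsing_inv_cancel_right _ _ hGdet]
  -- first formula
  have eq1 : (Q + Aᵀ * P * A - Aᵀ * P * B * G⁻¹ * (Bᵀ * P * A)) - Pstar
      = (A - B * Kst)ᵀ * (P - Pstar) * (A - B * Kst)
        - (A - B * Kst)ᵀ * (P - Pstar) * B * G⁻¹
          * (Bᵀ * (P - Pstar) * (A - B * Kst)) := by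
    rw [h5, hterm2]
    conv_lhs => rw [hARE]
    rw [← sub_eq_zero]
    have z2 : Kᵀ * G - Aᵀ * P * B = 0 := sub_eq_zero.mpr hKtG
    have z3 : Rt * Kst - Bᵀ * Pstar * A = 0 := sub_eq_zero.mpr hRtK
    have z4 : Kstᵀ * Rt - Aᵀ * Pstar * B = 0 := sub_eq_zero.mpr hKstRt
    have z5 : G - Rt - (Bᵀ * P * B - Bᵀ * Pstar * B) = 0 := by
      rw [hGdef, hRtdef]; abel
    trans ((Kstᵀ * Rt - Aᵀ * Pstar * B) - (Kᵀ * G - Aᵀ * P * B)) * Kst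
        + (Kᵀ - Kstᵀ) * (Rt * Kst - Bᵀ * Pstar * A)
        + Kᵀ * (G - Rt - (Bᵀ * P * B - Bᵀ * Pstar * B)) * Kst
    · simp only [Matrix.transpose_sub, Matrix.transpose_mul, Matrix.mul_sub,
        Matrix.sub_mul, Matrix.mul_add, Matrix.add_mul, Matrix.mul_assoc]
      abel
    · rw [z2, z3, z4, z5]
      simp
  -- Woodbury step
  have z9 : S * S - (P - Pstar) = 0 := sub_eq_zero.mpr hSS
  have hMN : (1 + S * B * Rt⁻¹ * (Bᵀ * S)) * (1 - S * B * G⁻¹ * (Bᵀ * S)) = 1 := by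
    rw [← sub_eq_zero]
    have z1 : G * G⁻¹ - 1 = 0 := sub_eq_zero.mpr hGinv
    have z2 : Rt⁻¹ * Rt - 1 = 0 := sub_eq_zero.mpr hRtinv
    have z3 : G - Rt - Bᵀ * (P - Pstar) * B = 0 := by
      rw [← hGG']; abel
    trans S * B * (-(Rt⁻¹ * (G * G⁻¹ - 1)) + (Rt⁻¹ * Rt - 1) * G⁻¹
        + Rt⁻¹ * (G - Rt - Bᵀ * (P - Pstar) * B) * G⁻¹
        - Rt⁻¹ * (Bᵀ * (S * S - (P - Pstar)) * B) * G⁻¹) * (Bᵀ * S)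
    · simp only [Matrix.mul_sub, Matrix.sub_mul, Matrix.mul_add, Matrix.add_mul,
        Matrix.mul_neg, Matrix.neg_mul, Matrix.mul_one, Matrix.one_mul,
        Matrix.mul_assoc]
      abel
    · rw [z1, z2, z3, z9]
      simp
  have hMunit : IsUnit (1 + S * B * Rt⁻¹ * (Bᵀ * S)) :=
    (Matrix.isUnit_iff_isUnit_det _).mpr (Matrix.isUnit_det_of_right_inverse hMN)
  have hMinv : (1 + S * B * Rt⁻¹ * (Bᵀ * S))⁻¹ = 1 - S * B * G⁻¹ * (Bᵀ * S) :=
    Matrix.inv_eq_right_inv hMN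
  -- second formula
  have eq2 : (A - B * Kst)ᵀ * (P - Pstar) * (A - B * Kst)
        - (A - B * Kst)ᵀ * (P - Pstar) * B * G⁻¹
          * (Bᵀ * (P - Pstar) * (A - B * Kst))
      = (A - B * Kst)ᵀ * S * (1 - S * B * G⁻¹ * (Bᵀ * S)) * (S * (A - B * Kst)) := by
    rw [← sub_eq_zero]
    trans -((A - B * Kst)ᵀ * (S * S - (P - Pstar)) * (A - B * Kst))
        + (A - B * Kst)ᵀ * (S * S - (P - Pstar)) * B * G⁻¹
          * (Bᵀ * (P - Pstar) * (A - B * Kst))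
        + (A - B * Kst)ᵀ * (S * S) * B * G⁻¹
          * (Bᵀ * (S * S - (P - Pstar)) * (A - B * Kst))
    · simp only [Matrix.mul_sub, Matrix.sub_mul, Matrix.mul_add, Matrix.add_mul,
        Matrix.mul_neg, Matrix.neg_mul, Matrix.mul_one, Matrix.one_mul,
        Matrix.mul_assoc]
      abel
    · rw [z9]
      simp
  refine ⟨hGpd.isUnit, hRtpd.isUnit, ?_, hMunit, ?_, ?_⟩
  · rw [hGG']; exact hGpd.isUnit
  · rw [hGG', hAbar]; exact eq1
  · rw [hAbar, hMinv, eq1, eq2]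
end

section
/- Let A be a real n×n matrix, B a real n×m matrix, Q symmetric positive semidefinite, R symmetric positive definite, and let P* be a symmetric positive semidefinite solution of the algebraic Riccati equation P* = Q + AᵀP*A − AᵀP*B(R + BᵀP*B)⁻¹BᵀP*A. Set Ā := A − B(R + BᵀP*B)⁻¹BᵀP*A. If P is symmetric with P ⪰ P*, then its Riccati update P⁺ := Q + AᵀPA − AᵀPB(R + BᵀPB)⁻¹BᵀPA satisfies P* ⪯ P⁺ ⪯ P* + Āᵀ(P − P*)Ā. In particular, the Riccati difference equation preserves the order P_t ⪰ P* at every step when initialized at a terminal matrix Q_N ⪰ P*. -/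
open Matrix

lemma riccati_key {n m : ℕ} (A : Matrix (Fin n) (Fin n) ℝ) (B : Matrix (Fin n) (Fin m) ℝ)
    (Q P : Matrix (Fin n) (Fin n) ℝ) (R : Matrix (Fin m) (Fin m) ℝ)
    (hP : Pᵀ = P) (hRs : Rᵀ = R) (hU : IsUnit (R + Bᵀ * P * B).det)
    (K' : Matrix (Fin m) (Fin n) ℝ) :
    Q + K'ᵀ * R * K' + (A - B * K')ᵀ * P * (A - B * K')
      = (Q + Aᵀ * P * A - Aᵀ * P * B * (R + Bᵀ * P * B)⁻¹ * (Bᵀ * P * A))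
        + (K' - (R + Bᵀ * P * B)⁻¹ * (Bᵀ * P * A))ᵀ * (R + Bᵀ * P * B)
          * (K' - (R + Bᵀ * P * B)⁻¹ * (Bᵀ * P * A)) := by
  set S := R + Bᵀ * P * B with hSdef
  have hSs : Sᵀ = S := by
    rw [hSdef]; simp [transpose_add, transpose_mul, hP, hRs, Matrix.mul_assoc]
  set G := S⁻¹ with hGdef
  set M := Bᵀ * P * A with hMdef
  have hGs : Gᵀ = G := by rw [hGdef, transpose_nonsing_inv, hSs]
  have hSG : ∀ X : Matrix (Fin m) (Fin n) ℝ, S * (G * X) = X := fun X => by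
    rw [← Matrix.mul_assoc, mul_nonsing_inv S hU, Matrix.one_mul]
  have hGS : ∀ X : Matrix (Fin m) (Fin n) ℝ, G * (S * X) = X := fun X => by
    rw [← Matrix.mul_assoc, nonsing_inv_mul S hU, Matrix.one_mul]
  have hMt : Mᵀ = Aᵀ * P * B := by
    rw [hMdef]; simp [transpose_mul, hP, Matrix.mul_assoc]
  have expand : (K' - G * M)ᵀ * S * (K' - G * M)
      = K'ᵀ * (S * K') - K'ᵀ * M - Mᵀ * K' + Mᵀ * (G * M) := by
    simp only [transpose_sub, transpose_mul, hGs, Matrix.sub_mul, Matrix.mul_sub,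
      Matrix.mul_assoc, hSG, hGS]
    abel
  rw [expand]
  have hMG : Aᵀ * P * B * G * M = Mᵀ * (G * M) := by rw [← hMt, Matrix.mul_assoc]
  rw [hMG]
  simp only [hSdef, hMdef, transpose_sub, transpose_mul, transpose_add, hP,
    transpose_transpose, Matrix.mul_sub, Matrix.sub_mul, Matrix.mul_add, Matrix.add_mul,
    Matrix.mul_assoc]
  abel

lemma riccati_step {n m : ℕ}
    (A : Matrix (Fin n) (Fin n) ℝ) (B : Matrix (Fin n) (Fin m) ℝ)
    (Q Pstar : Matrix (Fin n) (Fin n) ℝ) (R : Matrix (Fin m) (Fin m) ℝ)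
    (hQs : Q.IsSymm) (hR : R.PosDef) (hPstar : Pstar.PosSemidef)
    (hARE : Pstar = Q + Aᵀ * Pstar * A
      - Aᵀ * Pstar * B * (R + Bᵀ * Pstar * B)⁻¹ * (Bᵀ * Pstar * A))
    (P : Matrix (Fin n) (Fin n) ℝ) (hPsym : P.IsSymm) (hPge : (P - Pstar).PosSemidef) :
    (Q + Aᵀ * P * A - Aᵀ * P * B * (R + Bᵀ * P * B)⁻¹ * (Bᵀ * P * A)).IsSymm ∧
    ((Q + Aᵀ * P * A - Aᵀ * P * B * (R + Bᵀ * P * B)⁻¹ * (Bᵀ * P * A)) - Pstar).PosSemidef ∧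
    (Pstar + (A - B * (R + Bᵀ * Pstar * B)⁻¹ * (Bᵀ * Pstar * A))ᵀ * (P - Pstar)
        * (A - B * (R + Bᵀ * Pstar * B)⁻¹ * (Bᵀ * Pstar * A))
      - (Q + Aᵀ * P * A - Aᵀ * P * B * (R + Bᵀ * P * B)⁻¹ * (Bᵀ * P * A))).PosSemidef := by
  have hPs : Pᵀ = P := hPsym
  have hPstars : Pstarᵀ = Pstar := by
    rw [← conjTranspose_eq_transpose_of_trivial]; exact hPstar.1
  have hRs : Rᵀ = R := by
    rw [← conjTranspose_eq_transpose_of_trivial]; exact hR.1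
  have hP : P.PosSemidef := by
    have h := hPstar.add hPge
    rwa [show Pstar + (P - Pstar) = P by abel] at h
  have hconj : ∀ (X : Matrix (Fin n) (Fin n) ℝ) (C : Matrix (Fin n) (Fin m) ℝ),
      X.PosSemidef → (Cᵀ * X * C).PosSemidef := fun X C hX => by
    have := hX.conjTranspose_mul_mul_same C
    rwa [conjTranspose_eq_transpose_of_trivial] at this
  have hconj' : ∀ (X : Matrix (Fin m) (Fin m) ℝ) (C : Matrix (Fin m) (Fin n) ℝ),
      X.PosSemidef → (Cᵀ * X * C).PosSemidef := fun X C hX => by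
    have := hX.conjTranspose_mul_mul_same C
    rwa [conjTranspose_eq_transpose_of_trivial] at this
  have hconjn : ∀ (X : Matrix (Fin n) (Fin n) ℝ) (C : Matrix (Fin n) (Fin n) ℝ),
      X.PosSemidef → (Cᵀ * X * C).PosSemidef := fun X C hX => by
    have := hX.conjTranspose_mul_mul_same C
    rwa [conjTranspose_eq_transpose_of_trivial] at this
  have hS_PD : (R + Bᵀ * P * B).PosDef := hR.add_posSemidef (hconj P B hP)
  have hSst_PD : (R + Bᵀ * Pstar * B).PosDef := hR.add_posSemidef (hconj Pstar B hPstar)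
  have hU : IsUnit (R + Bᵀ * P * B).det := hS_PD.det_pos.ne'.isUnit
  have hUst : IsUnit (R + Bᵀ * Pstar * B).det := hSst_PD.det_pos.ne'.isUnit
  set K := (R + Bᵀ * P * B)⁻¹ * (Bᵀ * P * A) with hKdef
  set Kst := (R + Bᵀ * Pstar * B)⁻¹ * (Bᵀ * Pstar * A) with hKstdef
  set Pplus := Q + Aᵀ * P * A - Aᵀ * P * B * (R + Bᵀ * P * B)⁻¹ * (Bᵀ * P * A) with hPplusdef
  -- f(K,P) = Pplus
  have id1 : Q + Kᵀ * R * K + (A - B * K)ᵀ * P * (A - B * K) = Pplus := by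
    have := riccati_key A B Q P R hPs hRs hU K
    rw [← hKdef] at this
    simpa [sub_self] using this
  -- f(K,P*) = P* + (K-K*)ᵀ S* (K-K*)
  have id2 : Q + Kᵀ * R * K + (A - B * K)ᵀ * Pstar * (A - B * K)
      = Pstar + (K - Kst)ᵀ * (R + Bᵀ * Pstar * B) * (K - Kst) := by
    have := riccati_key A B Q Pstar R hPstars hRs hUst K
    rwa [← hARE] at this
  -- f(K*,P*) = P*
  have id3 : Q + Kstᵀ * R * Kst + (A - B * Kst)ᵀ * Pstar * (A - B * Kst) = Pstar := by
    have := riccati_key A B Q Pstar R hPstars hRs hUst Kst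
    rw [← hARE, ← hKstdef] at this
    simpa [sub_self] using this
  -- f(K*,P) = Pplus + (K*-K)ᵀ S (K*-K)
  have id4 : Q + Kstᵀ * R * Kst + (A - B * Kst)ᵀ * P * (A - B * Kst)
      = Pplus + (Kst - K)ᵀ * (R + Bᵀ * P * B) * (Kst - K) :=
    riccati_key A B Q P R hPs hRs hU Kst
  -- Part 1
  have e1 : Pplus - Pstar = (A - B * K)ᵀ * (P - Pstar) * (A - B * K)
      + (K - Kst)ᵀ * (R + Bᵀ * Pstar * B) * (K - Kst) := by
    have h1 : (A - B * K)ᵀ * (P - Pstar) * (A - B * K)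
        = (A - B * K)ᵀ * P * (A - B * K) - (A - B * K)ᵀ * Pstar * (A - B * K) := by
      simp only [Matrix.mul_sub, Matrix.sub_mul]; abel
    rw [h1, ← id1]
    have h2 : (K - Kst)ᵀ * (R + Bᵀ * Pstar * B) * (K - Kst)
        = (Q + Kᵀ * R * K + (A - B * K)ᵀ * Pstar * (A - B * K)) - Pstar := by
      rw [id2]; abel
    rw [h2]; abel
  have part1 : (Pplus - Pstar).PosSemidef := by
    rw [e1]
    exact (hconjn (P - Pstar) (A - B * K) hPge).add (hconj' (R + Bᵀ * Pstar * B) (K - Kst) hSst_PD.posSemidef)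
  -- Part 2
  have e2 : Pstar + (A - B * Kst)ᵀ * (P - Pstar) * (A - B * Kst) - Pplus
      = (Kst - K)ᵀ * (R + Bᵀ * P * B) * (Kst - K) := by
    have h1 : (A - B * Kst)ᵀ * (P - Pstar) * (A - B * Kst)
        = (A - B * Kst)ᵀ * P * (A - B * Kst) - (A - B * Kst)ᵀ * Pstar * (A - B * Kst) := by
      simp only [Matrix.mul_sub, Matrix.sub_mul]; abel
    rw [h1]
    nth_rewrite 1 [← id3]
    have : Q + Kstᵀ * R * Kst + (A - B * Kst)ᵀ * Pstar * (A - B * Kst)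
        + ((A - B * Kst)ᵀ * P * (A - B * Kst) - (A - B * Kst)ᵀ * Pstar * (A - B * Kst))
        = Q + Kstᵀ * R * Kst + (A - B * Kst)ᵀ * P * (A - B * Kst) := by abel
    rw [this, id4]; abel
  have part2 : (Pstar + (A - B * (R + Bᵀ * Pstar * B)⁻¹ * (Bᵀ * Pstar * A))ᵀ * (P - Pstar)
      * (A - B * (R + Bᵀ * Pstar * B)⁻¹ * (Bᵀ * Pstar * A)) - Pplus).PosSemidef := by
    have hAbar : A - B * (R + Bᵀ * Pstar * B)⁻¹ * (Bᵀ * Pstar * A) = A - B * Kst := by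
      rw [hKstdef, Matrix.mul_assoc]
    rw [hAbar, e2]
    exact hconj' (R + Bᵀ * P * B) (Kst - K) hS_PD.posSemidef
  -- Symmetry
  have hGs : ((R + Bᵀ * (P * B))⁻¹)ᵀ = (R + Bᵀ * (P * B))⁻¹ := by
    rw [transpose_nonsing_inv]
    congr 1
    simp [transpose_add, transpose_mul, hPs, hRs, Matrix.mul_assoc]
  have hsym : Pplus.IsSymm := by
    show Pplusᵀ = Pplus
    rw [hPplusdef]
    simp only [transpose_sub, transpose_add, transpose_mul, transpose_transpose, hPs, hGs,
      hQs.eq, Matrix.mul_assoc]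
  exact ⟨hsym, part1, part2⟩


open Matrix Finset

/-- Monotonicity of the Riccati update above the ARE solution:
if `P ⪰ P*` then `P* ⪯ P⁺ ⪯ P* + Āᵀ(P - P*)Ā`; in particular the Riccati
difference equation initialized at `Q_N ⪰ P*` satisfies `P_t ⪰ P*` at every step. -/
theorem riccati_update_order_preserving {n m : ℕ}
    (A : Matrix (Fin n) (Fin n) ℝ) (B : Matrix (Fin n) (Fin m) ℝ)
    (Q Pstar P : Matrix (Fin n) (Fin n) ℝ) (R : Matrix (Fin m) (Fin m) ℝ)
    (hQ : Q.PosSemidef) (hR : R.PosDef) (hPstar : Pstar.PosSemidef)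
    (hARE : Pstar = Q + Aᵀ * Pstar * A
      - Aᵀ * Pstar * B * (R + Bᵀ * Pstar * B)⁻¹ * (Bᵀ * Pstar * A))
    (hPsym : P.IsSymm) (hPge : (P - Pstar).PosSemidef) :
    letI Abar := A - B * (R + Bᵀ * Pstar * B)⁻¹ * (Bᵀ * Pstar * A)
    letI Pplus := Q + Aᵀ * P * A - Aᵀ * P * B * (R + Bᵀ * P * B)⁻¹ * (Bᵀ * P * A)
    (Pplus - Pstar).PosSemidef ∧
    (Pstar + Abarᵀ * (P - Pstar) * Abar - Pplus).PosSemidef ∧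
    (∀ (N : ℕ) (QN : Matrix (Fin n) (Fin n) ℝ), QN.IsSymm → (QN - Pstar).PosSemidef →
      ∀ Pseq : ℕ → Matrix (Fin n) (Fin n) ℝ, Pseq N = QN →
        (∀ t, t < N → Pseq t = Q + Aᵀ * Pseq (t + 1) * A
          - Aᵀ * Pseq (t + 1) * B * (R + Bᵀ * Pseq (t + 1) * B)⁻¹
            * (Bᵀ * Pseq (t + 1) * A)) →
        ∀ t ≤ N, (Pseq t - Pstar).PosSemidef) := by
  have hQs : Q.IsSymm := by
    rw [Matrix.IsSymm, ← conjTranspose_eq_transpose_of_trivial]; exact hQ.1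
  obtain ⟨hsym1, hpsd1, hpsd2⟩ :=
    riccati_step A B Q Pstar R hQs hR hPstar hARE P hPsym hPge
  refine ⟨hpsd1, hpsd2, ?_⟩
  intro N QN hQNsym hQNpsd Pseq hNend hrec t htN
  have main : ∀ d t, t + d = N → (Pseq t).IsSymm ∧ (Pseq t - Pstar).PosSemidef := by
    intro d
    induction d with
    | zero =>
      intro t htN
      have : t = N := by omega
      subst this
      rw [hNend]
      exact ⟨hQNsym, hQNpsd⟩
    | succ d ih =>
      intro t htN
      obtain ⟨hsym, hpsd⟩ := ih (t + 1) (by omega)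
      have hlt : t < N := by omega
      rw [hrec t hlt]
      obtain ⟨h1, h2, _⟩ :=
        riccati_step A B Q Pstar R hQs hR hPstar hARE (Pseq (t + 1)) hsym hpsd
      exact ⟨h1, h2⟩
  exact (main (N - t) t (by omega)).2
end

section
/- Let A be a real n×n matrix, B a real n×m matrix, Q and R symmetric positive definite, and let P* be a symmetric positive definite solution of the algebraic Riccati equation P* = Q + AᵀP*A − AᵀP*B(R + BᵀP*B)⁻¹BᵀP*A, with Ā := A − B(R + BᵀP*B)⁻¹BᵀP*A. Let Q_N be symmetric with Q_N ⪰ P*, and define the Riccati difference equation by P_N = Q_N and P_t = Q + AᵀP_{t+1}A − AᵀP_{t+1}B(R + BᵀP_{t+1}B)⁻¹BᵀP_{t+1}A for t = N−1, …, 0. Then for every t ∈ {0, …, N}: |P_t − P*|_{P*} ≤ ‖Ā‖_{P*}^{2(N−t)} · |Q_N − P*|_{P*}, and consequently ‖P_t − P*‖ ≤ ‖P*‖ · ‖Ā‖_{P*}^{2(N−t)} · |Q_N − P*|_{P*}; since ‖Ā‖_{P*} < 1, the Riccati difference equation converges exponentially to the ARE solution. -/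
open Matrix Finset

namespace RicAux

variable {n m : ℕ}

/-- embed a plain vector into Euclidean space -/
noncomputable def e {n : ℕ} (z : Fin n → ℝ) : EuclideanSpace ℝ (Fin n) :=
  (WithLp.equiv 2 (Fin n → ℝ)).symm z

lemma inner_e (x y : Fin n → ℝ) : (inner ℝ (e x) (e y) : ℝ) = x ⬝ᵥ y := by
  simp [e, PiLp.inner_apply, dotProduct, RCLike.inner_apply, mul_comm]

lemma norm_e_sq (x : Fin n → ℝ) : ‖e x‖ ^ 2 = x ⬝ᵥ x := by
  rw [← inner_e, real_inner_self_eq_norm_sq]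

lemma norm_mulVec_le (M : Matrix (Fin n) (Fin n) ℝ) (z : Fin n → ℝ) :
    ‖e (M *ᵥ z)‖ ≤ specNorm M * ‖e z‖ := by
  have h : e (M *ᵥ z) = (LinearMap.toContinuousLinearMap (Matrix.toEuclideanLin M)) (e z) := by
    simp [e, Matrix.toEuclideanLin_apply_piLp_toLp]
  rw [h]
  exact (LinearMap.toContinuousLinearMap (Matrix.toEuclideanLin M)).le_opNorm _

lemma quad_le_specNorm (X : Matrix (Fin n) (Fin n) ℝ) (z : Fin n → ℝ) :
    z ⬝ᵥ X *ᵥ z ≤ specNorm X * (z ⬝ᵥ z) := by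
  have h1 : z ⬝ᵥ X *ᵥ z = (inner ℝ (e z) (e (X *ᵥ z)) : ℝ) := (inner_e _ _).symm
  rw [h1, ← norm_e_sq]
  calc (inner ℝ (e z) (e (X *ᵥ z)) : ℝ) ≤ ‖e z‖ * ‖e (X *ᵥ z)‖ := real_inner_le_norm _ _
    _ ≤ ‖e z‖ * (specNorm X * ‖e z‖) :=
        mul_le_mul_of_nonneg_left (norm_mulVec_le X z) (norm_nonneg _)
    _ = specNorm X * ‖e z‖ ^ 2 := by ring

lemma dot_self_pos {z : Fin n → ℝ} (hz : z ≠ 0) : 0 < z ⬝ᵥ z := by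
  have h : e z ≠ 0 := by
    simp only [e, ne_eq]
    intro h
    apply hz
    have := congrArg (WithLp.equiv 2 (Fin n → ℝ)) h
    simpa using this
  have := norm_e_sq z
  nlinarith [norm_pos_iff.mpr h]

lemma dot_self_nonneg (z : Fin n → ℝ) : 0 ≤ z ⬝ᵥ z := by
  rw [← norm_e_sq]; positivity

lemma specNorm_nonneg {p q : ℕ} (M : Matrix (Fin p) (Fin q) ℝ) : 0 ≤ specNorm M :=
  norm_nonneg _

lemma psd_quad {X : Matrix (Fin n) (Fin n) ℝ} (hX : X.PosSemidef) (z : Fin n → ℝ) :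
    0 ≤ z ⬝ᵥ X *ᵥ z := by simpa using hX.dotProduct_mulVec_nonneg z

lemma pd_quad {X : Matrix (Fin n) (Fin n) ℝ} (hX : X.PosDef) {z : Fin n → ℝ} (hz : z ≠ 0) :
    0 < z ⬝ᵥ X *ᵥ z := by simpa using hX.dotProduct_mulVec_pos hz

lemma herm_symm {X : Matrix (Fin n) (Fin n) ℝ} (hX : X.IsHermitian) : Xᵀ = X := by
  rw [← Matrix.conjTranspose_eq_transpose_of_trivial]; exact hX

lemma quad_conj {p q : ℕ} (M : Matrix (Fin p) (Fin q) ℝ) (X : Matrix (Fin p) (Fin p) ℝ)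
    (z : Fin q → ℝ) :
    z ⬝ᵥ (Mᵀ * X * M) *ᵥ z = (M *ᵥ z) ⬝ᵥ X *ᵥ (M *ᵥ z) := by
  rw [← Matrix.mulVec_mulVec, ← Matrix.mulVec_mulVec, Matrix.dotProduct_mulVec,
    Matrix.vecMul_transpose]

lemma psd_conj {p q : ℕ} {X : Matrix (Fin p) (Fin p) ℝ} (hX : X.PosSemidef)
    (M : Matrix (Fin p) (Fin q) ℝ) : (Mᵀ * X * M).PosSemidef := by
  have := hX.conjTranspose_mul_mul_same M
  rwa [Matrix.conjTranspose_eq_transpose_of_trivial] at this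

lemma quad_sub (X Y : Matrix (Fin n) (Fin n) ℝ) (z : Fin n → ℝ) :
    z ⬝ᵥ (X - Y) *ᵥ z = z ⬝ᵥ X *ᵥ z - z ⬝ᵥ Y *ᵥ z := by
  rw [Matrix.sub_mulVec, dotProduct_sub]

lemma quad_add (X Y : Matrix (Fin n) (Fin n) ℝ) (z : Fin n → ℝ) :
    z ⬝ᵥ (X + Y) *ᵥ z = z ⬝ᵥ X *ᵥ z + z ⬝ᵥ Y *ᵥ z := by
  rw [Matrix.add_mulVec, dotProduct_add]

lemma sq_norm_S (S : Matrix (Fin n) (Fin n) ℝ) (hs : Sᵀ = S) (z : Fin n → ℝ) :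
    (S *ᵥ z) ⬝ᵥ (S *ᵥ z) = z ⬝ᵥ (S * S) *ᵥ z := by
  calc (S *ᵥ z) ⬝ᵥ (S *ᵥ z) = ((S *ᵥ z) ᵥ* S) ⬝ᵥ z := Matrix.dotProduct_mulVec _ _ _
    _ = (S *ᵥ (S *ᵥ z)) ⬝ᵥ z := by nth_rewrite 2 [← hs]; rw [Matrix.vecMul_transpose]
    _ = ((S * S) *ᵥ z) ⬝ᵥ z := by rw [Matrix.mulVec_mulVec]
    _ = z ⬝ᵥ (S * S) *ᵥ z := dotProduct_comm _ _

open scoped MatrixOrder in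
lemma specNorm_le_of_quad {X : Matrix (Fin n) (Fin n) ℝ} (hX : X.PosSemidef) {c : ℝ}
    (hc : 0 ≤ c) (h : ∀ z, z ⬝ᵥ X *ᵥ z ≤ c * (z ⬝ᵥ z)) : specNorm X ≤ c := by
  set S := CFC.sqrt X with hSdef
  have hS : S.PosSemidef := (CFC.sqrt_nonneg X).posSemidef
  have hSS : S * S = X := CFC.sqrt_mul_sqrt_self X hX.nonneg
  have hsymm : Sᵀ = S := herm_symm hS.1
  have key : ∀ z : Fin n → ℝ, ‖e (S *ᵥ z)‖ ≤ Real.sqrt c * ‖e z‖ := by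
    intro z
    have h1 : ‖e (S *ᵥ z)‖ ^ 2 ≤ (Real.sqrt c * ‖e z‖) ^ 2 := by
      rw [norm_e_sq, sq_norm_S S hsymm z, hSS, mul_pow, Real.sq_sqrt hc]
      calc z ⬝ᵥ X *ᵥ z ≤ c * (z ⬝ᵥ z) := h z
        _ = c * ‖e z‖ ^ 2 := by rw [norm_e_sq]
    have h2 : (0:ℝ) ≤ Real.sqrt c * ‖e z‖ := by positivity
    nlinarith [norm_nonneg (e (S *ᵥ z))]
  apply ContinuousLinearMap.opNorm_le_bound _ hc
  intro x
  set z := (WithLp.equiv 2 (Fin n → ℝ)) x with hzd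
  have hx : x = e z := rfl
  have happ : (LinearMap.toContinuousLinearMap (Matrix.toEuclideanLin X)) x = e (X *ᵥ z) := by
    rw [hx]; simp [e, Matrix.toEuclideanLin_apply_piLp_toLp]
  rw [happ, hx]
  have hXz : X *ᵥ z = S *ᵥ (S *ᵥ z) := by rw [Matrix.mulVec_mulVec, hSS]
  rw [hXz]
  calc ‖e (S *ᵥ (S *ᵥ z))‖ ≤ Real.sqrt c * ‖e (S *ᵥ z)‖ := key _
    _ ≤ Real.sqrt c * (Real.sqrt c * ‖e z‖) :=
        mul_le_mul_of_nonneg_left (key z) (Real.sqrt_nonneg c)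
    _ = Real.sqrt c * Real.sqrt c * ‖e z‖ := by ring
    _ = c * ‖e z‖ := by rw [Real.mul_self_sqrt hc]

open scoped MatrixOrder in
lemma coercive {W : Matrix (Fin n) (Fin n) ℝ} (hW : W.PosDef) :
    ∃ c : ℝ, 0 < c ∧ ∀ z : Fin n → ℝ, c * (z ⬝ᵥ z) ≤ z ⬝ᵥ W *ᵥ z := by
  set S := CFC.sqrt W with hSdef
  have hS : S.PosSemidef := (CFC.sqrt_nonneg W).posSemidef
  have hSS : S * S = W := CFC.sqrt_mul_sqrt_self W hW.posSemidef.nonneg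
  have hsymm : Sᵀ = S := herm_symm hS.1
  have hdet : IsUnit S.det := by
    have hd : S.det * S.det = W.det := by rw [← Matrix.det_mul, hSS]
    have hWdet := hW.det_pos
    have hne : S.det ≠ 0 := by intro h0; rw [h0, mul_zero] at hd; linarith
    exact hne.isUnit
  have hTS : S⁻¹ * S = 1 := Matrix.nonsing_inv_mul S hdet
  have hK : (0:ℝ) < specNorm (S⁻¹) ^ 2 + 1 := by positivity
  refine ⟨(specNorm (S⁻¹) ^ 2 + 1)⁻¹, by positivity, fun z => ?_⟩
  rw [inv_mul_le_iff₀ hK]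
  have hz2 : z ⬝ᵥ z ≤ (specNorm (S⁻¹) ^ 2) * (z ⬝ᵥ W *ᵥ z) + 0 := by
    have hrec : z = S⁻¹ *ᵥ (S *ᵥ z) := by rw [Matrix.mulVec_mulVec, hTS, Matrix.one_mulVec]
    have h1 : ‖e z‖ ≤ specNorm S⁻¹ * ‖e (S *ᵥ z)‖ := by
      nth_rewrite 1 [hrec]; exact norm_mulVec_le _ _
    have h2 : ‖e z‖ ^ 2 ≤ specNorm S⁻¹ ^ 2 * ‖e (S *ᵥ z)‖ ^ 2 := by
      rw [← mul_pow]; apply pow_le_pow_left₀ (norm_nonneg _) h1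
    rw [norm_e_sq, norm_e_sq, sq_norm_S S hsymm z, hSS] at h2
    linarith
  have h3 : 0 ≤ z ⬝ᵥ W *ᵥ z := psd_quad hW.posSemidef z
  nlinarith

/-- ratio sets relative to a PD matrix are bounded above -/
lemma ratio_le {W X : Matrix (Fin n) (Fin n) ℝ} (hW : W.PosDef) {c : ℝ} (hc : 0 < c)
    (hco : ∀ z : Fin n → ℝ, c * (z ⬝ᵥ z) ≤ z ⬝ᵥ W *ᵥ z) {z : Fin n → ℝ} (hz : z ≠ 0) :
    (z ⬝ᵥ X *ᵥ z) / (z ⬝ᵥ W *ᵥ z) ≤ specNorm X / c := by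
  have hzz := dot_self_pos hz
  have hWq := pd_quad hW hz
  rw [div_le_div_iff₀ hWq hc]
  have h1 : z ⬝ᵥ X *ᵥ z ≤ specNorm X * (z ⬝ᵥ z) := quad_le_specNorm X z
  have h2 : c * (z ⬝ᵥ z) ≤ z ⬝ᵥ W *ᵥ z := hco z
  have h3 : 0 ≤ specNorm X := norm_nonneg _
  nlinarith

lemma wrel_bddAbove (W X : Matrix (Fin n) (Fin n) ℝ) (hW : W.PosDef) :
    BddAbove {r : ℝ | ∃ z : Fin n → ℝ, z ≠ 0 ∧
      r = (z ⬝ᵥ X.mulVec z) / (z ⬝ᵥ W.mulVec z)} := by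
  obtain ⟨c, hc, hco⟩ := coercive hW
  refine ⟨specNorm X / c, ?_⟩
  rintro r ⟨z, hz, rfl⟩
  exact ratio_le hW hc hco hz

lemma le_wrel {W X : Matrix (Fin n) (Fin n) ℝ} (hW : W.PosDef) (z : Fin n → ℝ) :
    z ⬝ᵥ X *ᵥ z ≤ wrelBound W X * (z ⬝ᵥ W *ᵥ z) := by
  by_cases hz : z = 0
  · simp [hz]
  · have hmem : (z ⬝ᵥ X *ᵥ z) / (z ⬝ᵥ W *ᵥ z) ∈ {r : ℝ | ∃ z : Fin n → ℝ, z ≠ 0 ∧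
        r = (z ⬝ᵥ X.mulVec z) / (z ⬝ᵥ W.mulVec z)} := ⟨z, hz, rfl⟩
    have hle := le_csSup (wrel_bddAbove W X hW) hmem
    have hWq := pd_quad hW hz
    rw [div_le_iff₀ hWq] at hle
    calc z ⬝ᵥ X *ᵥ z ≤ _ := hle
      _ = wrelBound W X * (z ⬝ᵥ W *ᵥ z) := rfl

lemma wrel_le {W X : Matrix (Fin n) (Fin n) ℝ} (hW : W.PosDef) {c : ℝ} (hc : 0 ≤ c)
    (h : ∀ z : Fin n → ℝ, z ⬝ᵥ X *ᵥ z ≤ c * (z ⬝ᵥ W *ᵥ z)) : wrelBound W X ≤ c := by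
  apply Real.sSup_le _ hc
  rintro r ⟨z, hz, rfl⟩
  rw [div_le_iff₀ (pd_quad hW hz)]
  exact h z

lemma wrel_nonneg {W X : Matrix (Fin n) (Fin n) ℝ} (hW : W.PosDef) (hX : X.PosSemidef) :
    0 ≤ wrelBound W X := by
  apply Real.sSup_nonneg
  rintro r ⟨z, hz, rfl⟩
  exact div_nonneg (psd_quad hX z) (pd_quad hW hz).le

lemma winduced_nonneg (W M : Matrix (Fin n) (Fin n) ℝ) : 0 ≤ winducedNorm W M := by
  apply Real.sSup_nonneg
  rintro r ⟨z, hz, rfl⟩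
  exact Real.sqrt_nonneg _

lemma le_winduced {W : Matrix (Fin n) (Fin n) ℝ} (M : Matrix (Fin n) (Fin n) ℝ)
    (hW : W.PosDef) (z : Fin n → ℝ) :
    z ⬝ᵥ (Mᵀ * W * M) *ᵥ z ≤ (winducedNorm W M) ^ 2 * (z ⬝ᵥ W *ᵥ z) := by
  by_cases hz : z = 0
  · simp [hz]
  · obtain ⟨c, hc, hco⟩ := coercive hW
    have hbdd : BddAbove {r : ℝ | ∃ z : Fin n → ℝ, z ≠ 0 ∧
        r = Real.sqrt ((z ⬝ᵥ (Mᵀ * W * M).mulVec z) / (z ⬝ᵥ W.mulVec z))} := by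
      refine ⟨Real.sqrt (specNorm (Mᵀ * W * M) / c), ?_⟩
      rintro r ⟨z', hz', rfl⟩
      exact Real.sqrt_le_sqrt (ratio_le hW hc hco hz')
    have hmem : Real.sqrt ((z ⬝ᵥ (Mᵀ * W * M) *ᵥ z) / (z ⬝ᵥ W *ᵥ z)) ∈
        {r : ℝ | ∃ z : Fin n → ℝ, z ≠ 0 ∧
          r = Real.sqrt ((z ⬝ᵥ (Mᵀ * W * M).mulVec z) / (z ⬝ᵥ W.mulVec z))} := ⟨z, hz, rfl⟩
    have hle : Real.sqrt ((z ⬝ᵥ (Mᵀ * W * M) *ᵥ z) / (z ⬝ᵥ W *ᵥ z)) ≤ winducedNorm W M :=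
      le_csSup hbdd hmem
    have hWq := pd_quad hW hz
    have hnum : 0 ≤ z ⬝ᵥ (Mᵀ * W * M) *ᵥ z := psd_quad (psd_conj hW.posSemidef M) z
    have hratio : 0 ≤ (z ⬝ᵥ (Mᵀ * W * M) *ᵥ z) / (z ⬝ᵥ W *ᵥ z) := div_nonneg hnum hWq.le
    have hsq : (z ⬝ᵥ (Mᵀ * W * M) *ᵥ z) / (z ⬝ᵥ W *ᵥ z) ≤ (winducedNorm W M) ^ 2 := by
      have h0 := Real.sqrt_nonneg ((z ⬝ᵥ (Mᵀ * W * M) *ᵥ z) / (z ⬝ᵥ W *ᵥ z))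
      have hss := Real.sq_sqrt hratio
      nlinarith [hle]
    rw [← div_le_iff₀ hWq]
    exact hsq

lemma S_posdef {R : Matrix (Fin m) (Fin m) ℝ} {P : Matrix (Fin n) (Fin n) ℝ}
    (B : Matrix (Fin n) (Fin m) ℝ) (hR : R.PosDef) (hP : P.PosSemidef) :
    (R + Bᵀ * P * B).PosDef := by
  have h : (Bᵀ * P * B).PosSemidef := by
    have := hP.conjTranspose_mul_mul_same B
    rwa [Matrix.conjTranspose_eq_transpose_of_trivial] at this
  exact hR.add_posSemidef h

/-- Completion of squares for the Riccati operator. -/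
lemma completion (A : Matrix (Fin n) (Fin n) ℝ) (B : Matrix (Fin n) (Fin m) ℝ)
    (Q P : Matrix (Fin n) (Fin n) ℝ) (R : Matrix (Fin m) (Fin m) ℝ)
    (hP : Pᵀ = P) (hR : Rᵀ = R) (hS : IsUnit (R + Bᵀ * P * B).det)
    (L : Matrix (Fin m) (Fin n) ℝ) :
    Q + Aᵀ * P * A - Aᵀ * P * B * (R + Bᵀ * P * B)⁻¹ * (Bᵀ * P * A)
      + (L - (R + Bᵀ * P * B)⁻¹ * (Bᵀ * P * A))ᵀ * (R + Bᵀ * P * B)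
          * (L - (R + Bᵀ * P * B)⁻¹ * (Bᵀ * P * A))
      = Q + Lᵀ * R * L + (A - B * L)ᵀ * P * (A - B * L) := by
  set S := R + Bᵀ * P * B with hSdef
  set M := Bᵀ * P * A with hMdef
  have hS1 : S * S⁻¹ = 1 := Matrix.mul_nonsing_inv S hS
  have hS2 : S⁻¹ * S = 1 := Matrix.nonsing_inv_mul S hS
  have hSsymm : Sᵀ = S := by
    rw [hSdef, Matrix.transpose_add, hR, Matrix.transpose_mul, Matrix.transpose_mul,
      Matrix.transpose_transpose, hP, Matrix.mul_assoc]
  have hMt : Mᵀ = Aᵀ * P * B := by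
    rw [hMdef, Matrix.transpose_mul, Matrix.transpose_mul, Matrix.transpose_transpose, hP,
      Matrix.mul_assoc]
  have hKt : (S⁻¹ * M)ᵀ = Mᵀ * S⁻¹ := by
    rw [Matrix.transpose_mul, Matrix.transpose_nonsing_inv, hSsymm]
  have e1 : (L - S⁻¹ * M)ᵀ * S * (L - S⁻¹ * M)
      = Lᵀ * S * L - Lᵀ * M - Mᵀ * L + Mᵀ * S⁻¹ * M := by
    have h1 : S * (L - S⁻¹ * M) = S * L - M := by
      rw [Matrix.mul_sub, ← Matrix.mul_assoc, hS1, Matrix.one_mul]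
    rw [Matrix.transpose_sub, hKt, Matrix.mul_assoc, h1]
    rw [Matrix.sub_mul, Matrix.mul_sub, Matrix.mul_sub]
    have h2 : Mᵀ * S⁻¹ * (S * L) = Mᵀ * L := by
      rw [Matrix.mul_assoc Mᵀ S⁻¹ (S * L), ← Matrix.mul_assoc S⁻¹ S L, hS2, Matrix.one_mul]
    rw [h2, ← Matrix.mul_assoc, ← Matrix.mul_assoc]
    noncomm_ring
  rw [e1, hMt]
  have hexp : (A - B * L)ᵀ * P * (A - B * L)
      = Aᵀ * P * A - Aᵀ * P * (B * L) - (B * L)ᵀ * P * A + (B * L)ᵀ * P * (B * L) := by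
    rw [Matrix.transpose_sub]; noncomm_ring
  rw [hexp]
  have hBL : (B * L)ᵀ = Lᵀ * Bᵀ := Matrix.transpose_mul _ _
  rw [hBL, hSdef, hMdef]
  rw [Matrix.mul_add Lᵀ R (Bᵀ * P * B), Matrix.add_mul]
  simp only [Matrix.mul_assoc]
  abel

end RicAux

open RicAux in
/-- Exponential convergence of the Riccati difference equation
to the ARE solution, measured in the `P*`-relative bound and in spectral norm;
moreover the closed loop `Ā` contracts in the `P*`-induced norm. -/
theorem riccati_difference_exponential_convergence {n m : ℕ}
    (A : Matrix (Fin n) (Fin n) ℝ) (B : Matrix (Fin n) (Fin m) ℝ)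
    (Q Pstar QN : Matrix (Fin n) (Fin n) ℝ) (R : Matrix (Fin m) (Fin m) ℝ)
    (hQ : Q.PosDef) (hR : R.PosDef) (hPstar : Pstar.PosDef)
    (hARE : Pstar = Q + Aᵀ * Pstar * A
      - Aᵀ * Pstar * B * (R + Bᵀ * Pstar * B)⁻¹ * (Bᵀ * Pstar * A))
    (hQN : QN.IsSymm) (hQNP : (QN - Pstar).PosSemidef)
    (N : ℕ) (P : ℕ → Matrix (Fin n) (Fin n) ℝ) (hPN : P N = QN)
    (hP : ∀ t, t < N → P t = Q + Aᵀ * P (t + 1) * A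
      - Aᵀ * P (t + 1) * B * (R + Bᵀ * P (t + 1) * B)⁻¹ * (Bᵀ * P (t + 1) * A)) :
    letI Abar := A - B * (R + Bᵀ * Pstar * B)⁻¹ * (Bᵀ * Pstar * A)
    winducedNorm Pstar Abar < 1 ∧
    ∀ t ≤ N,
      wrelBound Pstar (P t - Pstar)
        ≤ winducedNorm Pstar Abar ^ (2 * (N - t)) * wrelBound Pstar (QN - Pstar) ∧
      specNorm (P t - Pstar)
        ≤ specNorm Pstar * winducedNorm Pstar Abar ^ (2 * (N - t))
          * wrelBound Pstar (QN - Pstar) := by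
  have hRsymm : Rᵀ = R := herm_symm hR.1
  have hPsymm : Pstarᵀ = Pstar := herm_symm hPstar.1
  have hSpd : (R + Bᵀ * Pstar * B).PosDef := S_posdef B hR hPstar.posSemidef
  have hSdet : IsUnit (R + Bᵀ * Pstar * B).det := hSpd.det_pos.ne'.isUnit
  -- Lyapunov identity at `Pstar`
  have hc0 := completion A B Q Pstar R hPsymm hRsymm hSdet
      ((R + Bᵀ * Pstar * B)⁻¹ * (Bᵀ * Pstar * A))
  simp only [sub_self, Matrix.transpose_zero, Matrix.zero_mul, Matrix.mul_zero, add_zero] at hc0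
  rw [← Matrix.mul_assoc B ((R + Bᵀ * Pstar * B)⁻¹) (Bᵀ * Pstar * A)] at hc0
  have hlyap := hARE.trans hc0
  set a := winducedNorm Pstar (A - B * (R + Bᵀ * Pstar * B)⁻¹ * (Bᵀ * Pstar * A)) with ha
  set b := wrelBound Pstar (QN - Pstar) with hb
  have ha0 : 0 ≤ a := winduced_nonneg _ _
  have hb0 : 0 ≤ b := wrel_nonneg hPstar hQNP
  have hwind : ∀ z : Fin n → ℝ,
      z ⬝ᵥ ((A - B * (R + Bᵀ * Pstar * B)⁻¹ * (Bᵀ * Pstar * A))ᵀ * Pstar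
        * (A - B * (R + Bᵀ * Pstar * B)⁻¹ * (Bᵀ * Pstar * A))) *ᵥ z
        ≤ a ^ 2 * (z ⬝ᵥ Pstar *ᵥ z) := fun z => le_winduced _ hPstar z
  -- the contraction property
  have h1lt : a < 1 := by
    obtain ⟨c0, hc0p, hc0Q⟩ := coercive hQ
    have hP1b : ∀ z : Fin n → ℝ, z ⬝ᵥ Pstar *ᵥ z ≤ (specNorm Pstar + 1) * (z ⬝ᵥ z) := by
      intro z
      have h1 := quad_le_specNorm Pstar z
      have h2 : 0 ≤ z ⬝ᵥ z := dot_self_nonneg z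
      nlinarith
    set ε := min (c0 / (specNorm Pstar + 1)) 1 with hεdef
    have hsp : (0:ℝ) < specNorm Pstar + 1 := by
      have := specNorm_nonneg Pstar; linarith
    have hε : 0 < ε := lt_min (div_pos hc0p hsp) one_pos
    have hε1 : ε ≤ 1 := min_le_right _ _
    have hεP : ∀ z : Fin n → ℝ, ε * (z ⬝ᵥ Pstar *ᵥ z) ≤ z ⬝ᵥ Q *ᵥ z := by
      intro z
      have h1 := hc0Q z
      have h2 := hP1b z
      have h3 : 0 ≤ z ⬝ᵥ Pstar *ᵥ z := psd_quad hPstar.posSemidef z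
      have h4 : ε ≤ c0 / (specNorm Pstar + 1) := min_le_left _ _
      have h5 : ε * (z ⬝ᵥ Pstar *ᵥ z) ≤ (c0 / (specNorm Pstar + 1)) * (z ⬝ᵥ Pstar *ᵥ z) :=
        mul_le_mul_of_nonneg_right h4 h3
      have h6 : (c0 / (specNorm Pstar + 1)) * (z ⬝ᵥ Pstar *ᵥ z)
          ≤ (c0 / (specNorm Pstar + 1)) * ((specNorm Pstar + 1) * (z ⬝ᵥ z)) :=
        mul_le_mul_of_nonneg_left h2 (le_of_lt (div_pos hc0p hsp))
      have h7 : (c0 / (specNorm Pstar + 1)) * ((specNorm Pstar + 1) * (z ⬝ᵥ z))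
          = c0 * (z ⬝ᵥ z) := by field_simp
      linarith
    have hle : a ≤ Real.sqrt (1 - ε) := by
      rw [ha]
      apply Real.sSup_le _ (Real.sqrt_nonneg _)
      rintro r ⟨z, hz, rfl⟩
      apply Real.sqrt_le_sqrt
      rw [div_le_iff₀ (pd_quad hPstar hz)]
      have s := congrArg (fun M => z ⬝ᵥ M *ᵥ z) hlyap
      simp only [quad_add] at s
      have hG := psd_quad (psd_conj hR.posSemidef
        ((R + Bᵀ * Pstar * B)⁻¹ * (Bᵀ * Pstar * A))) z
      have hQe := hεP z
      linarith
    have hlt : Real.sqrt (1 - ε) < 1 := by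
      have h2 : (0:ℝ) ≤ 1 - ε := by linarith
      calc Real.sqrt (1 - ε) < Real.sqrt 1 := Real.sqrt_lt_sqrt h2 (by linarith)
        _ = 1 := Real.sqrt_one
    linarith
  -- the main invariant, proved by backwards induction
  have inv : ∀ k t, t + k = N → (P t).IsHermitian ∧
      (∀ z : Fin n → ℝ, 0 ≤ z ⬝ᵥ (P t - Pstar) *ᵥ z) ∧
      (∀ z : Fin n → ℝ, z ⬝ᵥ (P t - Pstar) *ᵥ z ≤ a ^ (2 * k) * b * (z ⬝ᵥ Pstar *ᵥ z)) := by
    intro k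
    induction k with
    | zero =>
      intro t htN
      have htN' : t = N := by omega
      subst htN'
      rw [hPN]
      refine ⟨?_, fun z => psd_quad hQNP z, fun z => ?_⟩
      · show QNᴴ = QN
        rw [Matrix.conjTranspose_eq_transpose_of_trivial]
        exact hQN
      · have h := le_wrel (W := Pstar) (X := QN - Pstar) hPstar z
        rw [hb]
        simpa using h
    | succ k ih =>
      intro t htN
      obtain ⟨ihH, ihL, ihU⟩ := ih (t + 1) (by omega)
      have hsymm1 : (P (t + 1))ᵀ = P (t + 1) := herm_symm ihH
      have hpsd1q : ∀ z : Fin n → ℝ, 0 ≤ z ⬝ᵥ (P (t + 1)) *ᵥ z := by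
        intro z
        have h0 := ihL z
        rw [quad_sub] at h0
        have h1 := psd_quad hPstar.posSemidef z
        linarith
      have hpsd1 : (P (t + 1)).PosSemidef := .of_dotProduct_mulVec_nonneg ihH fun z => by simpa using hpsd1q z
      have hS1pd : (R + Bᵀ * P (t + 1) * B).PosDef := S_posdef B hR hpsd1
      have hS1det : IsUnit (R + Bᵀ * P (t + 1) * B).det := hS1pd.det_pos.ne'.isUnit
      have hPt := hP t (by omega)
      -- completion at `P (t+1)` with its own optimal gain
      have hc1 := completion A B Q (P (t + 1)) R hsymm1 hRsymm hS1det
          ((R + Bᵀ * P (t + 1) * B)⁻¹ * (Bᵀ * P (t + 1) * A))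
      simp only [sub_self, Matrix.transpose_zero, Matrix.zero_mul, Matrix.mul_zero,
        add_zero] at hc1
      have hPtK := hPt.trans hc1
      -- completion at `Pstar` with the suboptimal gain `K1`
      have hc2 := completion A B Q Pstar R hPsymm hRsymm hSdet
          ((R + Bᵀ * P (t + 1) * B)⁻¹ * (Bᵀ * P (t + 1) * A))
      rw [← hARE] at hc2
      -- completion at `P (t+1)` with the suboptimal gain `K*`
      have hc3 := completion A B Q (P (t + 1)) R hsymm1 hRsymm hS1det
          ((R + Bᵀ * Pstar * B)⁻¹ * (Bᵀ * Pstar * A))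
      rw [← hPt, ← Matrix.mul_assoc B ((R + Bᵀ * Pstar * B)⁻¹) (Bᵀ * Pstar * A)] at hc3
      refine ⟨?_, ?_, ?_⟩
      · -- Hermitian
        rw [hPtK]
        exact (hQ.1.add (psd_conj hR.posSemidef _).1).add (psd_conj hpsd1 _).1
      · -- lower bound
        intro z
        have s1 := congrArg (fun M => z ⬝ᵥ M *ᵥ z) hPtK
        have s2 := congrArg (fun M => z ⬝ᵥ M *ᵥ z) hc2
        simp only [quad_add, quad_conj] at s1 s2
        have dPt := quad_sub (P t) Pstar z
        have dih := ihL ((A - B * ((R + Bᵀ * P (t + 1) * B)⁻¹ * (Bᵀ * P (t + 1) * A))) *ᵥ z)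
        have dsub := quad_sub (P (t + 1)) Pstar
          ((A - B * ((R + Bᵀ * P (t + 1) * B)⁻¹ * (Bᵀ * P (t + 1) * A))) *ᵥ z)
        have hsq1 := psd_quad (psd_conj hSpd.posSemidef
          ((R + Bᵀ * P (t + 1) * B)⁻¹ * (Bᵀ * P (t + 1) * A)
            - (R + Bᵀ * Pstar * B)⁻¹ * (Bᵀ * Pstar * A))) z
        simp only [quad_add, quad_conj] at hsq1
        linarith
      · -- upper bound
        intro z
        have s3 := congrArg (fun M => z ⬝ᵥ M *ᵥ z) hc3
        have s4 := congrArg (fun M => z ⬝ᵥ M *ᵥ z) hlyap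
        simp only [quad_add, quad_conj] at s3 s4
        have dPt := quad_sub (P t) Pstar z
        have dih := ihU ((A - B * (R + Bᵀ * Pstar * B)⁻¹ * (Bᵀ * Pstar * A)) *ᵥ z)
        have dsub := quad_sub (P (t + 1)) Pstar
          ((A - B * (R + Bᵀ * Pstar * B)⁻¹ * (Bᵀ * Pstar * A)) *ᵥ z)
        have hsq2 := psd_quad (psd_conj hS1pd.posSemidef
          ((R + Bᵀ * Pstar * B)⁻¹ * (Bᵀ * Pstar * A)
            - (R + Bᵀ * P (t + 1) * B)⁻¹ * (Bᵀ * P (t + 1) * A))) z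
        simp only [quad_add, quad_conj] at hsq2
        have hw := hwind z
        rw [quad_conj] at hw
        have hn : (0:ℝ) ≤ a ^ (2 * k) * b := mul_nonneg (pow_nonneg ha0 _) hb0
        have hmul := mul_le_mul_of_nonneg_left hw hn
        have hpow : a ^ (2 * k) * b * (a ^ 2 * (z ⬝ᵥ Pstar *ᵥ z))
            = a ^ (2 * (k + 1)) * b * (z ⬝ᵥ Pstar *ᵥ z) := by ring
        linarith
  refine ⟨h1lt, fun t ht => ?_⟩
  obtain ⟨hH, hL, hU⟩ := inv (N - t) t (by omega)
  have hPSD : (P t - Pstar).PosSemidef := .of_dotProduct_mulVec_nonneg (hH.sub hPstar.1) fun z => by simpa using hL z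
  constructor
  · exact wrel_le hPstar (mul_nonneg (pow_nonneg ha0 _) hb0) hU
  · have hconst : (0:ℝ) ≤ specNorm Pstar * a ^ (2 * (N - t)) * b :=
      mul_nonneg (mul_nonneg (specNorm_nonneg _) (pow_nonneg ha0 _)) hb0
    apply specNorm_le_of_quad hPSD hconst
    intro z
    have h1 := hU z
    have h2 := quad_le_specNorm Pstar z
    have h3 : (0:ℝ) ≤ a ^ (2 * (N - t)) * b := mul_nonneg (pow_nonneg ha0 _) hb0
    have hmul := mul_le_mul_of_nonneg_left h2 h3
    have : a ^ (2 * (N - t)) * b * (specNorm Pstar * (z ⬝ᵥ z))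
        = specNorm Pstar * a ^ (2 * (N - t)) * b * (z ⬝ᵥ z) := by ring
    linarith
end

section
/- Let A be a real n×n matrix, B a real n×m matrix, R a symmetric positive definite m×m matrix, and let P₁, P₂ be symmetric positive semidefinite n×n matrices with Riccati gains K₁ := (R + BᵀP₁B)⁻¹BᵀP₁A and K₂ := (R + BᵀP₂B)⁻¹BᵀP₂A. Then ‖K₁ − K₂‖ ≤ ( ‖A − BK₂‖ · ‖B‖ / λ_min(R) ) · ‖P₁ − P₂‖. -/
open Matrix Finset
open RealInnerProductSpace

noncomputable def clmOf {p q : ℕ} (M : Matrix (Fin p) (Fin q) ℝ) :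
    EuclideanSpace ℝ (Fin q) →L[ℝ] EuclideanSpace ℝ (Fin p) :=
  LinearMap.toContinuousLinearMap (Matrix.toEuclideanLin M)

lemma specNorm_eq {p q : ℕ} (M : Matrix (Fin p) (Fin q) ℝ) : specNorm M = ‖clmOf M‖ := rfl

lemma specNorm_nonneg {p q : ℕ} (M : Matrix (Fin p) (Fin q) ℝ) : 0 ≤ specNorm M :=
  norm_nonneg _

lemma clmOf_apply {p q : ℕ} (M : Matrix (Fin p) (Fin q) ℝ) (x : EuclideanSpace ℝ (Fin q)) :
    clmOf M x = M.mulVec x := rfl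

lemma clmOf_mul {p q r : ℕ} (M : Matrix (Fin p) (Fin q) ℝ) (N : Matrix (Fin q) (Fin r) ℝ) :
    clmOf (M * N) = (clmOf M).comp (clmOf N) := by
  ext x i
  show ((M * N).mulVec x) i = (M.mulVec (N.mulVec x)) i
  rw [Matrix.mulVec_mulVec]

lemma specNorm_mul_le {p q r : ℕ} (M : Matrix (Fin p) (Fin q) ℝ)
    (N : Matrix (Fin q) (Fin r) ℝ) : specNorm (M * N) ≤ specNorm M * specNorm N := by
  rw [specNorm_eq, specNorm_eq, specNorm_eq, clmOf_mul]
  exact ContinuousLinearMap.opNorm_comp_le _ _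

lemma specNorm_transpose {p q : ℕ} (M : Matrix (Fin p) (Fin q) ℝ) :
    specNorm Mᵀ = specNorm M := by
  have h1 : Mᵀ = Mᴴ := by
    ext i j; simp [Matrix.conjTranspose_apply]
  rw [specNorm_eq, specNorm_eq, h1]
  have h2 : Matrix.toEuclideanLin Mᴴ = LinearMap.adjoint (Matrix.toEuclideanLin M) :=
    Matrix.toEuclideanLin_conjTranspose_eq_adjoint M
  rw [clmOf, clmOf, h2]
  have h3 : LinearMap.toContinuousLinearMap (LinearMap.adjoint (Matrix.toEuclideanLin M))
      = ContinuousLinearMap.adjoint (LinearMap.toContinuousLinearMap (Matrix.toEuclideanLin M)) := by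
    ext x
    simp [LinearMap.adjoint_toContinuousLinearMap]
  rw [h3]
  exact ContinuousLinearMap.adjoint.norm_map _

/-- Lipschitz-type bound on the Riccati gain as a function of
the Riccati matrix: `‖K₁ - K₂‖ ≤ (‖A - BK₂‖·‖B‖/λ_min(R))·‖P₁ - P₂‖`. -/
theorem riccati_gain_difference_bound {n m : ℕ}
    (A : Matrix (Fin n) (Fin n) ℝ) (B : Matrix (Fin n) (Fin m) ℝ)
    (R : Matrix (Fin m) (Fin m) ℝ) (P1 P2 : Matrix (Fin n) (Fin n) ℝ)
    (hR : R.PosDef) (hP1 : P1.PosSemidef) (hP2 : P2.PosSemidef) :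
    letI K1 := (R + Bᵀ * P1 * B)⁻¹ * (Bᵀ * P1 * A)
    letI K2 := (R + Bᵀ * P2 * B)⁻¹ * (Bᵀ * P2 * A)
    specNorm (K1 - K2)
      ≤ specNorm (A - B * K2) * specNorm B / lambdaMin R * specNorm (P1 - P2) := by
  set K1 := (R + Bᵀ * P1 * B)⁻¹ * (Bᵀ * P1 * A) with hK1
  set K2 := (R + Bᵀ * P2 * B)⁻¹ * (Bᵀ * P2 * A) with hK2
  clear_value K1 K2
  show specNorm (K1 - K2)
      ≤ specNorm (A - B * K2) * specNorm B / lambdaMin R * specNorm (P1 - P2)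
  rcases Nat.eq_zero_or_pos m with hm | hm
  · -- degenerate case m = 0
    subst hm
    have hD : (K1 - K2) = 0 := by ext i j; exact i.elim0
    have hL : lambdaMin R = 0 := by
      rw [lambdaMin]
      convert Real.sInf_empty using 2
      ext r
      simp only [Set.mem_setOf_eq, Set.mem_empty_iff_false, iff_false, not_exists]
      intro v ⟨hv, _⟩
      exact (hv (funext fun i => i.elim0)).elim
    rw [hD, hL, div_zero, zero_mul]
    have : specNorm (0 : Matrix (Fin 0) (Fin n) ℝ) = 0 := by
      rw [specNorm_eq]
      have : clmOf (0 : Matrix (Fin 0) (Fin n) ℝ) = 0 := by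
        ext x i; exact i.elim0
      rw [this, norm_zero]
    rw [this]
  · -- main case m > 0
    haveI : Nonempty (Fin m) := ⟨⟨0, hm⟩⟩
    haveI : Nontrivial (EuclideanSpace ℝ (Fin m)) :=
      (EuclideanSpace.equiv (Fin m) ℝ).toEquiv.nontrivial
    have htB : Bᴴ = Bᵀ := by ext i j; simp [Matrix.conjTranspose_apply]
    have hBPB1 : (Bᵀ * P1 * B).PosSemidef := by
      have := hP1.conjTranspose_mul_mul_same B; rwa [htB] at this
    have hBPB2 : (Bᵀ * P2 * B).PosSemidef := by
      have := hP2.conjTranspose_mul_mul_same B; rwa [htB] at this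
    have hS1 : (R + Bᵀ * P1 * B).PosDef := hR.add_posSemidef hBPB1
    have hS2 : (R + Bᵀ * P2 * B).PosDef := hR.add_posSemidef hBPB2
    have hdet1 : IsUnit (R + Bᵀ * P1 * B).det := isUnit_iff_ne_zero.mpr (ne_of_gt hS1.det_pos)
    have hdet2 : IsUnit (R + Bᵀ * P2 * B).det := isUnit_iff_ne_zero.mpr (ne_of_gt hS2.det_pos)
    set T := Matrix.toEuclideanLin R with hT
    have hTsym : T.IsSymmetric := (Matrix.isHermitian_iff_isSymmetric).1 hR.1
    have hev := LinearMap.IsSymmetric.hasEigenvalue_iInf_of_finiteDimensional hTsym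
    set μ : ℝ := ⨅ x : {x : EuclideanSpace ℝ (Fin m) // x ≠ 0},
        RCLike.re (inner ℝ (T ↑x) ↑x) / ‖(↑x : EuclideanSpace ℝ (Fin m))‖ ^ 2 with hμ
    have hbdd : BddBelow (Set.range fun x : {x : EuclideanSpace ℝ (Fin m) // x ≠ 0} =>
        RCLike.re (inner ℝ (T ↑x) ↑x) / ‖(↑x : EuclideanSpace ℝ (Fin m))‖ ^ 2) := by
      refine ⟨-‖clmOf R‖, ?_⟩
      rintro r ⟨x, rfl⟩
      have hx : (0:ℝ) < ‖(x : EuclideanSpace ℝ (Fin m))‖ ^ 2 :=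
        pow_pos (norm_pos_iff.mpr x.2) 2
      rw [le_div_iff₀ hx]
      have h1 : |⟪T ↑x, ↑x⟫| ≤ ‖T ↑x‖ * ‖(↑x : EuclideanSpace ℝ (Fin m))‖ :=
        abs_real_inner_le_norm _ _
      have h2 : ‖T ↑x‖ ≤ ‖clmOf R‖ * ‖(↑x : EuclideanSpace ℝ (Fin m))‖ :=
        (clmOf R).le_opNorm ↑x
      have h3 := abs_le.mp h1
      simp only [RCLike.re_to_real]
      nlinarith [norm_nonneg (↑x : EuclideanSpace ℝ (Fin m)), norm_nonneg (T ↑x)]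
    have hray : ∀ x : EuclideanSpace ℝ (Fin m), x ≠ 0 → μ * ‖x‖ ^ 2 ≤ ⟪T x, x⟫ := by
      intro x hx
      have h := ciInf_le hbdd (⟨x, hx⟩ : {x : EuclideanSpace ℝ (Fin m) // x ≠ 0})
      rw [← hμ] at h
      have hx2 : (0:ℝ) < ‖x‖ ^ 2 := pow_pos (norm_pos_iff.mpr hx) 2
      rw [le_div_iff₀ hx2] at h
      simpa [RCLike.re_to_real] using h
    obtain ⟨v, hv⟩ := hev.exists_hasEigenvector
    have hveq : R.mulVec v = μ • v := congrArg WithLp.ofLp (Module.End.mem_eigenspace_iff.mp hv.1)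
    have hv0 : (v : Fin m → ℝ) ≠ 0 := by
      intro h; apply hv.2; ext i; simpa using congrFun h i
    have hvdv : (0:ℝ) < (v : Fin m → ℝ) ⬝ᵥ v := by
      have h : ⟪v, v⟫ = ‖v‖ ^ 2 := real_inner_self_eq_norm_sq v
      have h2 : (0:ℝ) < ‖v‖ ^ 2 := pow_pos (norm_pos_iff.mpr hv.2) 2
      have h3 : ⟪v, v⟫ = (v : Fin m → ℝ) ⬝ᵥ v := by
        simp only [PiLp.inner_apply, dotProduct, RCLike.inner_apply, conj_trivial, mul_comm]
      rw [h3] at h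
      rw [← h] at h2
      exact h2
    have hμpos : 0 < μ := by
      have h1 : (0:ℝ) < star (v : Fin m → ℝ) ⬝ᵥ R.mulVec v := hR.dotProduct_mulVec_pos hv0
      rw [hveq] at h1
      have hdd : (v : Fin m → ℝ) ⬝ᵥ (μ • (v : Fin m → ℝ)) = μ * ((v : Fin m → ℝ) ⬝ᵥ v) := by
        simp only [dotProduct, PiLp.smul_apply, Pi.smul_apply, smul_eq_mul, Finset.mul_sum]
        exact Finset.sum_congr rfl fun i _ => by ring
      simp only [star_trivial] at h1
      rw [hdd] at h1
      nlinarith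
    have hlamlb : ∀ r ∈ {r : ℝ | ∃ w : Fin m → ℝ, w ≠ 0 ∧ R.mulVec w = r • w}, μ ≤ r := by
      rintro r ⟨w, hw0, hw⟩
      set wE : EuclideanSpace ℝ (Fin m) := (WithLp.equiv 2 (Fin m → ℝ)).symm w with hwEdef
      have hwE : wE ≠ 0 := by
        intro h; apply hw0; have := congrArg WithLp.ofLp h; simpa [hwEdef] using this
      have h1 := hray wE hwE
      have h2 : T wE = r • wE := congrArg (WithLp.toLp 2) hw
      rw [h2, real_inner_smul_left, real_inner_self_eq_norm_sq] at h1
      have hw2 : (0:ℝ) < ‖wE‖ ^ 2 := pow_pos (norm_pos_iff.mpr hwE) 2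
      exact le_of_mul_le_mul_right h1 hw2
    have hlam : lambdaMin R = μ := by
      refine le_antisymm (csInf_le ⟨μ, hlamlb⟩ ⟨v, hv0, hveq⟩)
        (le_csInf ⟨μ, v, hv0, hveq⟩ hlamlb)
    have hquadS : ∀ y : EuclideanSpace ℝ (Fin m),
        μ * ‖y‖ ≤ ‖clmOf (R + Bᵀ * P1 * B) y‖ := by
      intro y
      rcases eq_or_ne y 0 with rfl | hy
      · simp
      · have h1 : μ * ‖y‖ ^ 2 ≤ ⟪T y, y⟫ := hray y hy
        have h2 : (0:ℝ) ≤ (y : Fin m → ℝ) ⬝ᵥ (Bᵀ * P1 * B).mulVec y := by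
          have := hBPB1.dotProduct_mulVec_nonneg (y : Fin m → ℝ)
          simpa [star_trivial] using this
        have h3 : ⟪clmOf (R + Bᵀ * P1 * B) y, y⟫
            = ⟪T y, y⟫ + (y : Fin m → ℝ) ⬝ᵥ (Bᵀ * P1 * B).mulVec y := by
          have e1 : ∀ a b : EuclideanSpace ℝ (Fin m), ⟪a, b⟫ = (a : Fin m → ℝ) ⬝ᵥ b := by
            intro a b; simp [PiLp.inner_apply, dotProduct, mul_comm]
          rw [e1, e1]
          show ((R + Bᵀ * P1 * B).mulVec y) ⬝ᵥ (y : Fin m → ℝ)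
            = (R.mulVec y) ⬝ᵥ (y : Fin m → ℝ) + _
          rw [Matrix.add_mulVec, add_dotProduct,
            dotProduct_comm ((Bᵀ * P1 * B) *ᵥ (y : Fin m → ℝ)) (y : Fin m → ℝ)]
        have h4 : ⟪clmOf (R + Bᵀ * P1 * B) y, y⟫ ≤ ‖clmOf (R + Bᵀ * P1 * B) y‖ * ‖y‖ :=
          real_inner_le_norm _ _
        have hy2 : (0:ℝ) < ‖y‖ := norm_pos_iff.mpr hy
        nlinarith
    have key : (R + Bᵀ * P1 * B) * (K1 - K2) = Bᵀ * (P1 - P2) * (A - B * K2) := by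
      have h1 : (R + Bᵀ * P1 * B) * K1 = Bᵀ * P1 * A := by
        rw [hK1]; exact Matrix.mul_nonsing_inv_cancel_left _ _ hdet1
      have h2 : (R + Bᵀ * P2 * B) * K2 = Bᵀ * P2 * A := by
        rw [hK2]; exact Matrix.mul_nonsing_inv_cancel_left _ _ hdet2
      have hS1eq : R + Bᵀ * P1 * B = (R + Bᵀ * P2 * B) + Bᵀ * (P1 - P2) * B := by
        rw [Matrix.mul_sub, Matrix.sub_mul]; abel
      rw [Matrix.mul_sub, h1, hS1eq, Matrix.add_mul, h2]
      simp only [Matrix.mul_sub, Matrix.sub_mul, Matrix.mul_assoc]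
      abel
    have hDle : specNorm (K1 - K2) ≤ specNorm (Bᵀ * (P1 - P2) * (A - B * K2)) / μ := by
      rw [specNorm_eq]
      refine ContinuousLinearMap.opNorm_le_bound _
        (div_nonneg (specNorm_nonneg _) hμpos.le) ?_
      intro x
      have e1 : clmOf (R + Bᵀ * P1 * B) (clmOf (K1 - K2) x)
          = clmOf (Bᵀ * (P1 - P2) * (A - B * K2)) x := by
        rw [← ContinuousLinearMap.comp_apply, ← clmOf_mul, key]
      have e2 := hquadS (clmOf (K1 - K2) x)
      rw [e1] at e2
      have e3 : ‖clmOf (Bᵀ * (P1 - P2) * (A - B * K2)) x‖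
          ≤ specNorm (Bᵀ * (P1 - P2) * (A - B * K2)) * ‖x‖ := by
        rw [specNorm_eq]; exact (clmOf _).le_opNorm x
      rw [div_mul_eq_mul_div, le_div_iff₀ hμpos]
      calc ‖clmOf (K1 - K2) x‖ * μ = μ * ‖clmOf (K1 - K2) x‖ := mul_comm _ _
        _ ≤ ‖clmOf (Bᵀ * (P1 - P2) * (A - B * K2)) x‖ := e2
        _ ≤ specNorm (Bᵀ * (P1 - P2) * (A - B * K2)) * ‖x‖ := e3
    have hMle : specNorm (Bᵀ * (P1 - P2) * (A - B * K2))
        ≤ specNorm B * specNorm (P1 - P2) * specNorm (A - B * K2) := by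
      calc specNorm (Bᵀ * (P1 - P2) * (A - B * K2))
          ≤ specNorm (Bᵀ * (P1 - P2)) * specNorm (A - B * K2) := specNorm_mul_le _ _
        _ ≤ (specNorm Bᵀ * specNorm (P1 - P2)) * specNorm (A - B * K2) :=
            mul_le_mul_of_nonneg_right (specNorm_mul_le _ _) (specNorm_nonneg _)
        _ = specNorm B * specNorm (P1 - P2) * specNorm (A - B * K2) := by
            rw [specNorm_transpose]
    rw [hlam]
    calc specNorm (K1 - K2) ≤ specNorm (Bᵀ * (P1 - P2) * (A - B * K2)) / μ := hDle
      _ ≤ (specNorm B * specNorm (P1 - P2) * specNorm (A - B * K2)) / μ := by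
          gcongr
      _ = specNorm (A - B * K2) * specNorm B / μ * specNorm (P1 - P2) := by
          ring
end

section
/- Let B be a real n×m matrix, R a symmetric positive definite m×m matrix, and P a symmetric positive semidefinite n×n matrix. Then the n×n matrix I + PBR⁻¹Bᵀ is invertible, and (I + PBR⁻¹Bᵀ)⁻¹ = I − PB(R + BᵀPB)⁻¹Bᵀ. -/
open Matrix Finset

/-- Matrix inversion lemma: for `R` pd and `P` psd,
`I + PBR⁻¹Bᵀ` is invertible with inverse `I - PB(R + BᵀPB)⁻¹Bᵀ`. -/
theorem matrix_inversion_lemma {n m : ℕ}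
    (B : Matrix (Fin n) (Fin m) ℝ) (R : Matrix (Fin m) (Fin m) ℝ)
    (P : Matrix (Fin n) (Fin n) ℝ) (hR : R.PosDef) (hP : P.PosSemidef) :
    IsUnit ((1 : Matrix (Fin n) (Fin n) ℝ) + P * B * R⁻¹ * Bᵀ) ∧
    ((1 : Matrix (Fin n) (Fin n) ℝ) + P * B * R⁻¹ * Bᵀ)⁻¹
      = (1 : Matrix (Fin n) (Fin n) ℝ) - P * B * (R + Bᵀ * P * B)⁻¹ * Bᵀ := by
  have hS : (R + Bᵀ * P * B).PosDef := by
    have hX : (Bᵀ * P * B).PosSemidef := by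
      have := hP.mul_mul_conjTranspose_same Bᵀ
      simpa using this
    exact hR.add_posSemidef hX
  set S := R + Bᵀ * P * B with hSdef
  have hRdet : IsUnit R.det := isUnit_iff_ne_zero.mpr hR.det_pos.ne'
  have hSdet : IsUnit S.det := isUnit_iff_ne_zero.mpr hS.det_pos.ne'
  have hRr : R * R⁻¹ = 1 := Matrix.mul_nonsing_inv R hRdet
  have hRl : R⁻¹ * R = 1 := Matrix.nonsing_inv_mul R hRdet
  have hSr : S * S⁻¹ = 1 := Matrix.mul_nonsing_inv S hSdet
  have hSl : S⁻¹ * S = 1 := Matrix.nonsing_inv_mul S hSdet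
  have hmid1 : R⁻¹ * (Bᵀ * P * B) * S⁻¹ = R⁻¹ - S⁻¹ := by
    have h1 : R⁻¹ * (Bᵀ * P * B) = R⁻¹ * S - 1 := by
      rw [hSdef, Matrix.mul_add, hRl]; noncomm_ring
    rw [h1, Matrix.sub_mul, Matrix.mul_assoc, hSr]; noncomm_ring
  have hmid2 : S⁻¹ * (Bᵀ * P * B) * R⁻¹ = R⁻¹ - S⁻¹ := by
    have h1 : S⁻¹ * (Bᵀ * P * B) = 1 - S⁻¹ * R := by
      have : Bᵀ * P * B = S - R := by rw [hSdef]; noncomm_ring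
      rw [this, Matrix.mul_sub, hSl]
    rw [h1, Matrix.sub_mul, Matrix.mul_assoc, hRr, Matrix.mul_one, Matrix.one_mul]
  set A := P * B * R⁻¹ * Bᵀ with hA
  set C := P * B * S⁻¹ * Bᵀ with hC
  have hAC : A * C = A - C := by
    have h : A * C = P * B * (R⁻¹ * (Bᵀ * P * B) * S⁻¹) * Bᵀ := by
      simp only [hA, hC, Matrix.mul_assoc]
    rw [h, hmid1, hA, hC, Matrix.mul_sub, Matrix.sub_mul]
  have hCA : C * A = A - C := by
    have h : C * A = P * B * (S⁻¹ * (Bᵀ * P * B) * R⁻¹) * Bᵀ := by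
      simp only [hA, hC, Matrix.mul_assoc]
    rw [h, hmid2, hA, hC, Matrix.mul_sub, Matrix.sub_mul]
  have hright : (1 + A) * (1 - C) = 1 := by
    have : (1 + A) * (1 - C) = 1 + A - C - A * C := by noncomm_ring
    rw [this, hAC]; noncomm_ring
  have hleft : (1 - C) * (1 + A) = 1 := by
    have : (1 - C) * (1 + A) = 1 + A - C - C * A := by noncomm_ring
    rw [this, hCA]; noncomm_ring
  exact ⟨⟨⟨1 + A, 1 - C, hright, hleft⟩, rfl⟩, Matrix.inv_eq_right_inv hright⟩
end

section
/- Let A be a real n×n matrix, B a real n×m matrix, Q a symmetric n×n matrix, R a symmetric positive definite m×m matrix, and let P, P̃ be symmetric positive semidefinite n×n matrices. Denote by P⁺ := Q + AᵀPA − AᵀPB(R + BᵀPB)⁻¹BᵀPA and P̃⁺ := Q + AᵀP̃A − AᵀP̃B(R + BᵀP̃B)⁻¹BᵀP̃A their Riccati updates, and let K := (R + BᵀPB)⁻¹BᵀPA. Then P⁺ − P̃⁺ = Aᵀ(I + P̃BR⁻¹Bᵀ)⁻¹(P − P̃)(A − BK). -/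
open Matrix Finset

/-- Difference of two Riccati updates:
`P⁺ - P̃⁺ = Aᵀ(I + P̃BR⁻¹Bᵀ)⁻¹(P - P̃)(A - BK)` where `K` is the Riccati gain of `P`. -/
theorem riccati_update_difference_formula {n m : ℕ}
    (A : Matrix (Fin n) (Fin n) ℝ) (B : Matrix (Fin n) (Fin m) ℝ)
    (Q : Matrix (Fin n) (Fin n) ℝ) (R : Matrix (Fin m) (Fin m) ℝ)
    (P Pt : Matrix (Fin n) (Fin n) ℝ)
    (hQ : Q.IsSymm) (hR : R.PosDef) (hP : P.PosSemidef) (hPt : Pt.PosSemidef) :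
    letI Pplus := Q + Aᵀ * P * A - Aᵀ * P * B * (R + Bᵀ * P * B)⁻¹ * (Bᵀ * P * A)
    letI Ptplus := Q + Aᵀ * Pt * A - Aᵀ * Pt * B * (R + Bᵀ * Pt * B)⁻¹ * (Bᵀ * Pt * A)
    letI K := (R + Bᵀ * P * B)⁻¹ * (Bᵀ * P * A)
    Pplus - Ptplus
      = Aᵀ * ((1 : Matrix (Fin n) (Fin n) ℝ) + Pt * B * R⁻¹ * Bᵀ)⁻¹
          * ((P - Pt) * (A - B * K)) := by
  classical
  have hPBB : (Bᵀ * P * B).PosSemidef := by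
    simpa [Matrix.conjTranspose_eq_transpose_of_trivial] using
      hP.mul_mul_conjTranspose_same Bᵀ
  have hPtBB : (Bᵀ * Pt * B).PosSemidef := by
    simpa [Matrix.conjTranspose_eq_transpose_of_trivial] using
      hPt.mul_mul_conjTranspose_same Bᵀ
  have hS : (R + Bᵀ * P * B).PosDef := hR.add_posSemidef hPBB
  have hT : (R + Bᵀ * Pt * B).PosDef := hR.add_posSemidef hPtBB
  have hSdet : IsUnit (R + Bᵀ * P * B).det := (Matrix.isUnit_iff_isUnit_det _).1 hS.isUnit
  have hTdet : IsUnit (R + Bᵀ * Pt * B).det := (Matrix.isUnit_iff_isUnit_det _).1 hT.isUnit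
  have hRdet : IsUnit R.det := (Matrix.isUnit_iff_isUnit_det _).1 hR.isUnit
  set Si := (R + Bᵀ * P * B)⁻¹ with hSidef
  set Ti := (R + Bᵀ * Pt * B)⁻¹ with hTidef
  set Ri := R⁻¹ with hRidef
  -- invertibility of M
  have hCt : (B * Ri * Bᵀ).PosSemidef := by
    simpa [Matrix.conjTranspose_eq_transpose_of_trivial] using
      hR.inv.posSemidef.mul_mul_conjTranspose_same B
  have hMdet : IsUnit ((1 : Matrix (Fin n) (Fin n) ℝ) + Pt * B * Ri * Bᵀ).det := by
    obtain ⟨Sq, hSqmul, hSqpsd⟩ : ∃ Sq : Matrix (Fin n) (Fin n) ℝ, Sq * Sq = Pt ∧ Sq.PosSemidef := by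
      open scoped MatrixOrder in
      exact ⟨CFC.sqrt Pt, CFC.sqrt_mul_sqrt_self Pt hPt.nonneg, (CFC.sqrt_nonneg Pt).posSemidef⟩
    have h1 : Pt * B * Ri * Bᵀ = Sq * (Sq * (B * Ri * Bᵀ)) := by
      rw [← Matrix.mul_assoc, hSqmul]
      simp [Matrix.mul_assoc]
    rw [h1, Matrix.det_one_add_mul_comm]
    have h2 : (Sq * (B * Ri * Bᵀ) * Sq).PosSemidef := by
      have := hCt.mul_mul_conjTranspose_same Sq
      rwa [hSqpsd.isHermitian.eq] at this
    have h3 : ((1 : Matrix (Fin n) (Fin n) ℝ) + Sq * (B * Ri * Bᵀ) * Sq).PosDef :=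
      Matrix.PosDef.one.add_posSemidef h2
    exact (Matrix.isUnit_iff_isUnit_det _).1 h3.isUnit
  have hMcancel : ((1 : Matrix (Fin n) (Fin n) ℝ) + Pt * B * Ri * Bᵀ)⁻¹
      * ((1 : Matrix (Fin n) (Fin n) ℝ) + Pt * B * Ri * Bᵀ) = 1 :=
    Matrix.nonsing_inv_mul _ hMdet
  have hScancel : (R + Bᵀ * P * B) * Si = 1 := Matrix.mul_nonsing_inv _ hSdet
  have hTcancel : (R + Bᵀ * Pt * B) * Ti = 1 := Matrix.mul_nonsing_inv _ hTdet
  have hRcancel : Ri * R = 1 := Matrix.nonsing_inv_mul _ hRdet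
  have e1 : ∀ X : Matrix (Fin m) (Fin n) ℝ,
      Bᵀ * (P * (B * (Si * X))) = X - R * (Si * X) := by
    intro X
    have h := congrArg (· * X) hScancel
    simp only [Matrix.add_mul, Matrix.mul_assoc, Matrix.one_mul] at h
    exact eq_sub_of_add_eq' h
  have e2 : ∀ X : Matrix (Fin m) (Fin n) ℝ,
      Bᵀ * (Pt * (B * (Ti * X))) = X - R * (Ti * X) := by
    intro X
    have h := congrArg (· * X) hTcancel
    simp only [Matrix.add_mul, Matrix.mul_assoc, Matrix.one_mul] at h
    exact eq_sub_of_add_eq' h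
  have e3 : ∀ X : Matrix (Fin m) (Fin n) ℝ, Ri * (R * X) = X := by
    intro X; rw [← Matrix.mul_assoc, hRcancel, Matrix.one_mul]
  set E : Matrix (Fin n) (Fin n) ℝ :=
    (P - P * (B * (Si * (Bᵀ * P)))) - (Pt - Pt * (B * (Ti * (Bᵀ * Pt)))) with hEdef
  have key : ((1 : Matrix (Fin n) (Fin n) ℝ) + Pt * B * Ri * Bᵀ) * (E * A)
      = (P - Pt) * (A - B * (Si * (Bᵀ * P * A))) := by
    simp only [hEdef, Matrix.add_mul, Matrix.mul_add, Matrix.sub_mul, Matrix.mul_sub,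
      Matrix.mul_assoc, Matrix.one_mul, Matrix.mul_one, e1, e2, e3]
    abel
  rw [← key,
    ← Matrix.mul_assoc (Aᵀ * (1 + Pt * B * Ri * Bᵀ)⁻¹) (1 + Pt * B * Ri * Bᵀ) (E * A),
    Matrix.mul_assoc Aᵀ ((1 + Pt * B * Ri * Bᵀ)⁻¹) (1 + Pt * B * Ri * Bᵀ), hMcancel,
    Matrix.mul_one]
  simp only [hEdef, Matrix.sub_mul, Matrix.mul_sub, Matrix.mul_add, Matrix.add_mul,
    Matrix.mul_assoc]
  abel
end
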